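/- arXiv:2407.16683 — 3 statements merged into one kernel-verified Lean document; each statement's English description precedes it below -/
import Mathlib

section
/- Let V be a Gödel set having at least one accumulation point from above, i.e., some x ∈ V that is a limit of points of V strictly greater than x. Let L contain a unary predicate A and a 0-ary predicate (propositional atom) X. Then the sentence F := (∀x(A(x)∨X) ⊃ X) ∧ ∀x(((A(x)∨X) ⊃ X) ⊃ (A(x)∨X)) has no logically equivalent prenex sentence in G_V: no prenex L-sentence P satisfies I(F)=I(P) for all V-interpretations I. -/
namespace GodelPaper

/-- A first-order language: function and relation symbols of each arity. -/
structure Lang where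
  Func : ℕ → Type
  Rel : ℕ → Type

/-- A Gödel set: a closed subset of [0,1] containing 0 and 1. -/
def GodelSet (V : Set ℝ) : Prop :=
  IsClosed V ∧ V ⊆ Set.Icc 0 1 ∧ (0:ℝ) ∈ V ∧ (1:ℝ) ∈ V

/-- Terms with variables from `α`. -/
inductive Term (L : Lang) (α : Type) : Type
  | var : α → Term L α
  | func : ∀ {k}, L.Func k → (Fin k → Term L α) → Term L α

/-- A `V`-interpretation: nonempty domain, interpretation of function symbols,
and truth values in `V` for atomic sentences with parameters. -/
structure Interp (L : Lang) (V : Set ℝ) where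
  Dom : Type
  dom_nonempty : Nonempty Dom
  funMap : ∀ {k}, L.Func k → (Fin k → Dom) → Dom
  relVal : ∀ {k}, L.Rel k → (Fin k → Dom) → ℝ
  relVal_mem : ∀ {k} (R : L.Rel k) (v : Fin k → Dom), relVal R v ∈ V

def Term.eval {L : Lang} {V : Set ℝ} (I : Interp L V) {α : Type} (v : α → I.Dom) :
    Term L α → I.Dom
  | .var i => v i
  | .func f ts => I.funMap f fun j => Term.eval I v (ts j)

/-- Formulas of the Δ-extended language, with free variables among `Fin n`.
The quantifiers bind the *last* variable. Δ-free formulas (i.e. formulas of the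
plain language) are singled out by the predicate `DeltaFree` below. -/
inductive Form (L : Lang) : ℕ → Type
  | falsum : ∀ {n}, Form L n
  | atom : ∀ {n k}, L.Rel k → (Fin k → Term L (Fin n)) → Form L n
  | conj : ∀ {n}, Form L n → Form L n → Form L n
  | disj : ∀ {n}, Form L n → Form L n → Form L n
  | impl : ∀ {n}, Form L n → Form L n → Form L n
  | delta : ∀ {n}, Form L n → Form L n
  | all : ∀ {n}, Form L (n+1) → Form L n
  | ex : ∀ {n}, Form L (n+1) → Form L n

/-- The Gödel truth value of a formula under an interpretation and an
assignment of the free variables. -/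
noncomputable def Form.val {L : Lang} {V : Set ℝ} (I : Interp L V) :
    ∀ {n}, Form L n → (Fin n → I.Dom) → ℝ
  | _, .falsum, _ => 0
  | _, .atom R ts, ρ => I.relVal R fun j => Term.eval I ρ (ts j)
  | _, .conj A B, ρ => min (Form.val I A ρ) (Form.val I B ρ)
  | _, .disj A B, ρ => max (Form.val I A ρ) (Form.val I B ρ)
  | _, .impl A B, ρ => if Form.val I A ρ ≤ Form.val I B ρ then 1 else Form.val I B ρ
  | _, .delta A, ρ => if Form.val I A ρ = 1 then 1 else 0
  | _, .all A, ρ => sInf {v : ℝ | ∃ d : I.Dom, v = Form.val I A (Fin.snoc ρ d)}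
  | _, .ex A, ρ => sSup {v : ℝ | ∃ d : I.Dom, v = Form.val I A (Fin.snoc ρ d)}

/-- The value of a sentence. -/
noncomputable def Form.sval {L : Lang} {V : Set ℝ} (I : Interp L V) (A : Form L 0) : ℝ :=
  Form.val I A Fin.elim0

/-- `A` is valid in `G_V`. -/
def Valid {L : Lang} (V : Set ℝ) (A : Form L 0) : Prop :=
  ∀ I : Interp L V, Form.sval I A = 1

/-- `A` is 1-satisfiable in `G_V`. -/
def OneSat {L : Lang} (V : Set ℝ) (A : Form L 0) : Prop :=
  ∃ I : Interp L V, Form.sval I A = 1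

/-- `A` is classically satisfiable: it takes value 1 under a `V`-interpretation
assigning only values in {0,1} to atomic sentences. -/
def ClassSat {L : Lang} (V : Set ℝ) (A : Form L 0) : Prop :=
  ∃ I : Interp L V,
    (∀ {k : ℕ} (R : L.Rel k) (v : Fin k → I.Dom), I.relVal R v = 0 ∨ I.relVal R v = 1) ∧
    Form.sval I A = 1

/-- ¬A abbreviates A ⊃ ⊥. -/
def Form.not {L : Lang} {n : ℕ} (A : Form L n) : Form L n := Form.impl A Form.falsum

/-- A ↔ B abbreviates (A ⊃ B) ∧ (B ⊃ A). -/
def Form.iff {L : Lang} {n : ℕ} (A B : Form L n) : Form L n :=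
  Form.conj (Form.impl A B) (Form.impl B A)

/-- Formulas of the plain language (no Δ). -/
def DeltaFree {L : Lang} : ∀ {n}, Form L n → Prop
  | _, .falsum => True
  | _, .atom _ _ => True
  | _, .conj A B => DeltaFree A ∧ DeltaFree B
  | _, .disj A B => DeltaFree A ∧ DeltaFree B
  | _, .impl A B => DeltaFree A ∧ DeltaFree B
  | _, .delta _ => False
  | _, .all A => DeltaFree A
  | _, .ex A => DeltaFree A

/-- Quantifier-free formulas. -/
def QuantFree {L : Lang} : ∀ {n}, Form L n → Prop
  | _, .falsum => True
  | _, .atom _ _ => True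
  | _, .conj A B => QuantFree A ∧ QuantFree B
  | _, .disj A B => QuantFree A ∧ QuantFree B
  | _, .impl A B => QuantFree A ∧ QuantFree B
  | _, .delta A => QuantFree A
  | _, .all _ => False
  | _, .ex _ => False

/-- Formulas containing no universal quantifier. -/
def AllFree {L : Lang} : ∀ {n}, Form L n → Prop
  | _, .falsum => True
  | _, .atom _ _ => True
  | _, .conj A B => AllFree A ∧ AllFree B
  | _, .disj A B => AllFree A ∧ AllFree B
  | _, .impl A B => AllFree A ∧ AllFree B
  | _, .delta A => AllFree A
  | _, .all _ => False
  | _, .ex A => AllFree A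

/-- Prenex formulas: a block of quantifiers followed by a quantifier-free matrix. -/
inductive IsPrenex {L : Lang} : ∀ {n}, Form L n → Prop
  | qf {n} {A : Form L n} : QuantFree A → IsPrenex A
  | all {n} {A : Form L (n+1)} : IsPrenex A → IsPrenex (Form.all A)
  | ex {n} {A : Form L (n+1)} : IsPrenex A → IsPrenex (Form.ex A)

/-- Purely existential prenex formulas. -/
inductive ExPrenex {L : Lang} : ∀ {n}, Form L n → Prop
  | qf {n} {A : Form L n} : QuantFree A → ExPrenex A
  | ex {n} {A : Form L (n+1)} : ExPrenex A → ExPrenex (Form.ex A)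

/-- The glued interpretation `I_ω`: atoms with value ≤ ω keep their value,
all other atoms get value 1. Same domain and function interpretations. -/
noncomputable def Interp.glue {L : Lang} {V : Set ℝ} (I : Interp L V) (ω : ℝ)
    (h1 : (1:ℝ) ∈ V) : Interp L V where
  Dom := I.Dom
  dom_nonempty := I.dom_nonempty
  funMap := fun {k} f v => I.funMap f v
  relVal := fun {k} R v => if I.relVal R v ≤ ω then I.relVal R v else 1
  relVal_mem := fun {k} R v => by
    by_cases h : I.relVal R v ≤ ω
    · simpa [h] using I.relVal_mem R v
    · simpa [h] using h1

/-- The Gödel set `V_↑ = {1 - 1/k : k ≥ 1} ∪ {1}`. -/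
def Vup : Set ℝ := {x : ℝ | ∃ k : ℕ, 1 ≤ k ∧ x = 1 - 1/(k:ℝ)} ∪ {1}

/-- The `m`-element Gödel set `V_m = {1 - 1/k : 1 ≤ k ≤ m-1} ∪ {1}`. -/
def Vfin (m : ℕ) : Set ℝ :=
  {x : ℝ | ∃ k : ℕ, 1 ≤ k ∧ k ≤ m - 1 ∧ x = 1 - 1/(k:ℝ)} ∪ {1}

/-- Atomic formula built from a unary predicate. -/
def atom1 {L : Lang} (P : L.Rel 1) {n : ℕ} (t : Term L (Fin n)) : Form L n :=
  Form.atom P fun _ => t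

/-- Atomic formula built from a 0-ary predicate (propositional atom). -/
def atom0 {L : Lang} (X : L.Rel 0) {n : ℕ} : Form L n :=
  Form.atom X fun i => i.elim0

def Term.rename {L : Lang} {α β : Type} (f : α → β) : Term L α → Term L β
  | .var i => .var (f i)
  | .func g ts => .func g fun j => Term.rename f (ts j)

def Form.rename {L : Lang} : ∀ {m n}, (Fin m → Fin n) → Form L m → Form L n
  | _, _, _, .falsum => .falsum
  | _, _, f, .atom R ts => .atom R fun j => (ts j).rename f
  | _, _, f, .conj A B => .conj (A.rename f) (B.rename f)
  | _, _, f, .disj A B => .disj (A.rename f) (B.rename f)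
  | _, _, f, .impl A B => .impl (A.rename f) (B.rename f)
  | _, _, f, .delta A => .delta (A.rename f)
  | _, _, f, .all A =>
      .all (A.rename (Fin.lastCases (Fin.last _) fun i => Fin.castSucc (f i)))
  | _, _, f, .ex A =>
      .ex (A.rename (Fin.lastCases (Fin.last _) fun i => Fin.castSucc (f i)))

/-- Weakening: regard a formula with `n` free variables as one with `n+1`
free variables (not using the new last variable). -/
def Form.lift {L : Lang} {n : ℕ} (A : Form L n) : Form L (n+1) :=
  A.rename Fin.castSucc

def Term.subst {L : Lang} {α β : Type} (σ : α → Term L β) : Term L α → Term L β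
  | .var i => σ i
  | .func g ts => .func g fun j => Term.subst σ (ts j)

def Form.subst {L : Lang} : ∀ {m n}, (Fin m → Term L (Fin n)) → Form L m → Form L n
  | _, _, _, .falsum => .falsum
  | _, _, σ, .atom R ts => .atom R fun j => (ts j).subst σ
  | _, _, σ, .conj A B => .conj (A.subst σ) (B.subst σ)
  | _, _, σ, .disj A B => .disj (A.subst σ) (B.subst σ)
  | _, _, σ, .impl A B => .impl (A.subst σ) (B.subst σ)
  | _, _, σ, .delta A => .delta (A.subst σ)
  | _, _, σ, .all A =>
      .all (A.subst (Fin.lastCases (.var (Fin.last _))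
        fun i => (σ i).rename Fin.castSucc))
  | _, _, σ, .ex A =>
      .ex (A.subst (Fin.lastCases (.var (Fin.last _))
        fun i => (σ i).rename Fin.castSucc))

/-- The language `L ∪ {f}` with one new function symbol of arity `a`. -/
def Lang.addFunc (L : Lang) (a : ℕ) : Lang where
  Func := fun k => L.Func k ⊕ PLift (k = a)
  Rel := L.Rel

/-- The new function symbol of `L.addFunc a`. -/
def newFunc (L : Lang) (a : ℕ) : (L.addFunc a).Func a := Sum.inr ⟨rfl⟩

def Term.emb {L : Lang} {a : ℕ} {α : Type} : Term L α → Term (L.addFunc a) α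
  | .var i => .var i
  | .func g ts => .func (Sum.inl g) fun j => Term.emb (ts j)

/-- Embedding of `L`-formulas into the language with the extra function symbol. -/
def Form.emb {L : Lang} {a : ℕ} : ∀ {n}, Form L n → Form (L.addFunc a) n
  | _, .falsum => .falsum
  | _, .atom R ts => .atom R fun j => (ts j).emb
  | _, .conj A B => .conj A.emb B.emb
  | _, .disj A B => .disj A.emb B.emb
  | _, .impl A B => .impl A.emb B.emb
  | _, .delta A => .delta A.emb
  | _, .all A => .all A.emb
  | _, .ex A => .ex A.emb

/-- Prefix of `n` existential quantifiers (outermost quantifier binds variable 0). -/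
def Form.exN {L : Lang} : ∀ n, Form L n → Form L 0
  | 0, A => A
  | n+1, A => Form.exN n (Form.ex A)

/-- Prefix of `n` universal quantifiers (outermost quantifier binds variable 0). -/
def Form.allN {L : Lang} : ∀ n, Form L n → Form L 0
  | 0, A => A
  | n+1, A => Form.allN n (Form.all A)

section Aux

variable {L : Lang} {V : Set ℝ}

lemma val_mem (hV : V ⊆ Set.Icc 0 1) (I : Interp L V) :
    ∀ {n} (A : Form L n) (ρ : Fin n → I.Dom), Form.val I A ρ ∈ Set.Icc (0:ℝ) 1 := by
  intro n A
  induction A with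
  | falsum => intro ρ; simp [Form.val]
  | atom R ts => intro ρ; exact hV (I.relVal_mem R _)
  | conj A B ihA ihB =>
      intro ρ
      exact ⟨le_min (ihA ρ).1 (ihB ρ).1, min_le_of_left_le (ihA ρ).2⟩
  | disj A B ihA ihB =>
      intro ρ
      exact ⟨le_max_of_le_left (ihA ρ).1, max_le (ihA ρ).2 (ihB ρ).2⟩
  | impl A B ihA ihB =>
      intro ρ
      show (if _ then (1:ℝ) else _) ∈ _
      split_ifs
      · exact ⟨zero_le_one, le_refl 1⟩
      · exact ihB ρ
  | delta A ih =>
      intro ρ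
      show (if _ then (1:ℝ) else 0) ∈ _
      split_ifs
      · exact ⟨zero_le_one, le_refl 1⟩
      · exact ⟨le_refl 0, zero_le_one⟩
  | all A ih =>
      intro ρ
      obtain ⟨d⟩ := I.dom_nonempty
      have hbd : BddBelow {v : ℝ | ∃ d, v = Form.val I A (Fin.snoc ρ d)} :=
        ⟨0, by rintro u ⟨e, rfl⟩; exact (ih _).1⟩
      refine ⟨le_csInf ⟨_, d, rfl⟩ ?_, csInf_le_of_le hbd ⟨d, rfl⟩ (ih _).2⟩
      rintro u ⟨e, rfl⟩; exact (ih _).1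
  | ex A ih =>
      intro ρ
      obtain ⟨d⟩ := I.dom_nonempty
      have hbd : BddAbove {v : ℝ | ∃ d, v = Form.val I A (Fin.snoc ρ d)} :=
        ⟨1, by rintro u ⟨e, rfl⟩; exact (ih _).2⟩
      refine ⟨le_csSup_of_le hbd ⟨d, rfl⟩ (ih _).1, csSup_le ⟨_, d, rfl⟩ ?_⟩
      rintro u ⟨e, rfl⟩; exact (ih _).2

lemma val_dichotomy (hV : V ⊆ Set.Icc 0 1) (I : Interp L V) (s : ℝ) (h0 : 0 ≤ s)
    (hat : ∀ {k} (R : L.Rel k) (w : Fin k → I.Dom), I.relVal R w ≤ s) :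
    ∀ {n} (A : Form L n) (ρ : Fin n → I.Dom),
      Form.val I A ρ = 1 ∨ Form.val I A ρ ≤ s := by
  intro n A
  induction A with
  | falsum => intro ρ; exact Or.inr h0
  | atom R ts => intro ρ; exact Or.inr (hat R _)
  | conj A B ihA ihB =>
      intro ρ
      rcases ihA ρ with h1 | h1
      · rcases ihB ρ with h2 | h2
        · exact Or.inl (by rw [Form.val, h1, h2, min_self])
        · exact Or.inr (by rw [Form.val]; exact min_le_of_right_le h2)
      · exact Or.inr (by rw [Form.val]; exact min_le_of_left_le h1)
  | disj A B ihA ihB =>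
      intro ρ
      rcases ihA ρ with h1 | h1
      · exact Or.inl (by rw [Form.val, h1]; exact max_eq_left (val_mem hV I B ρ).2)
      · rcases ihB ρ with h2 | h2
        · exact Or.inl (by rw [Form.val, h2]; exact max_eq_right (val_mem hV I A ρ).2)
        · exact Or.inr (by rw [Form.val]; exact max_le h1 h2)
  | impl A B ihA ihB =>
      intro ρ
      rw [Form.val]
      split_ifs
      · exact Or.inl rfl
      · exact ihB ρ
  | delta A ih =>
      intro ρ
      rw [Form.val]
      split_ifs
      · exact Or.inl rfl
      · exact Or.inr h0
  | all A ih =>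
      intro ρ
      by_cases hd : ∀ d, Form.val I A (Fin.snoc ρ d) = 1
      · left
        rw [Form.val]
        have : {v : ℝ | ∃ d, v = Form.val I A (Fin.snoc ρ d)} = {1} := by
          ext u
          constructor
          · rintro ⟨e, rfl⟩; exact hd e
          · rintro rfl; obtain ⟨d⟩ := I.dom_nonempty; exact ⟨d, (hd d).symm⟩
        rw [this, csInf_singleton]
      · right
        push_neg at hd
        obtain ⟨d, hd⟩ := hd
        have hbd : BddBelow {v : ℝ | ∃ d, v = Form.val I A (Fin.snoc ρ d)} :=
          ⟨0, by rintro u ⟨e, rfl⟩; exact (val_mem hV I A _).1⟩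
        rw [Form.val]
        exact csInf_le_of_le hbd ⟨d, rfl⟩ ((ih _).resolve_left hd)
  | ex A ih =>
      intro ρ
      by_cases hd : ∃ d, Form.val I A (Fin.snoc ρ d) = 1
      · left
        obtain ⟨d, hd⟩ := hd
        have hbd : BddAbove {v : ℝ | ∃ d, v = Form.val I A (Fin.snoc ρ d)} :=
          ⟨1, by rintro u ⟨e, rfl⟩; exact (val_mem hV I A _).2⟩
        rw [Form.val]
        refine le_antisymm (csSup_le ⟨_, d, rfl⟩ ?_) (le_csSup_of_le hbd ⟨d, rfl⟩ hd.ge)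
        rintro u ⟨e, rfl⟩; exact (val_mem hV I A _).2
      · right
        push_neg at hd
        rw [Form.val]
        refine csSup_le ⟨_, Classical.choice I.dom_nonempty, rfl⟩ ?_
        rintro u ⟨e, rfl⟩
        exact (ih _).resolve_left (hd e)

lemma eval_glue (I : Interp L V) (ω : ℝ) (h1 : (1:ℝ) ∈ V) {α : Type} (v : α → I.Dom) :
    ∀ t : Term L α, Term.eval (I.glue ω h1) v t = Term.eval I v t
  | .var i => rfl
  | .func f ts => by
      show I.funMap f (fun j => Term.eval (I.glue ω h1) v (ts j)) = _
      rw [Term.eval]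
      exact congrArg _ (funext fun j => eval_glue I ω h1 v (ts j))

/-- The truncation function realized by `Interp.glue`. -/
private lemma glue_min {ω a b : ℝ} (hω : ω < 1) :
    (if min a b ≤ ω then min a b else 1) =
      min (if a ≤ ω then a else 1) (if b ≤ ω then b else 1) := by
  rcases le_total a b with hab | hab <;>
    simp only [min_def] <;> split_ifs <;> linarith

private lemma glue_max {ω a b : ℝ} (hω : ω < 1) :
    (if max a b ≤ ω then max a b else 1) =
      max (if a ≤ ω then a else 1) (if b ≤ ω then b else 1) := by
  rcases le_total a b with hab | hab <;>
    simp only [max_def] <;> split_ifs <;> linarith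

private lemma glue_impl {ω a b : ℝ} (hω : ω < 1) :
    (if (if a ≤ b then (1:ℝ) else b) ≤ ω then (if a ≤ b then (1:ℝ) else b) else 1) =
      (if (if a ≤ ω then a else 1) ≤ (if b ≤ ω then b else 1) then (1:ℝ)
       else (if b ≤ ω then b else 1)) := by
  split_ifs <;> linarith

lemma val_glue_qf (I : Interp L V) (ω : ℝ) (hω0 : 0 ≤ ω) (hω : ω < 1) (h1 : (1:ℝ) ∈ V) :
    ∀ {n} (A : Form L n), QuantFree A → DeltaFree A → ∀ ρ : Fin n → I.Dom,
      Form.val (I.glue ω h1) A ρ =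
        if Form.val I A ρ ≤ ω then Form.val I A ρ else 1 := by
  intro n A
  induction A with
  | falsum =>
      intro _ _ ρ
      simp [Form.val, hω0]
  | atom R ts =>
      intro _ _ ρ
      show (if I.relVal R _ ≤ ω then _ else 1) = _
      rw [Form.val, congrArg (I.relVal R) (funext fun j => eval_glue I ω h1 ρ (ts j))]
  | conj A B ihA ihB =>
      intro hq hd ρ
      erw [Form.val, Form.val, ihA hq.1 hd.1 ρ, ihB hq.2 hd.2 ρ]
      exact (glue_min hω).symm
  | disj A B ihA ihB =>
      intro hq hd ρ
      erw [Form.val, Form.val, ihA hq.1 hd.1 ρ, ihB hq.2 hd.2 ρ]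
      exact (glue_max hω).symm
  | impl A B ihA ihB =>
      intro hq hd ρ
      erw [Form.val, Form.val, ihA hq.1 hd.1 ρ, ihB hq.2 hd.2 ρ]
      exact (glue_impl hω).symm
  | delta A ih => intro _ hd _; exact absurd hd id
  | all A ih => intro hq _ _; exact absurd hq id
  | ex A ih => intro hq _ _; exact absurd hq id

theorem prenex_glue (hV : V ⊆ Set.Icc 0 1) (I : Interp L V) (s ω : ℝ)
    (h0s : 0 ≤ s) (hs : s < 1) (hω0 : 0 ≤ ω) (hω : ω < 1) (h1 : (1:ℝ) ∈ V)
    (hat : ∀ {k} (R : L.Rel k) (w : Fin k → I.Dom), I.relVal R w ≤ s) :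
    ∀ {n} {A : Form L n}, IsPrenex A → DeltaFree A → ∀ ρ : Fin n → I.Dom,
      Form.val I A ρ = 1 → Form.val (I.glue ω h1) A ρ = 1 := by
  intro n A hA
  induction hA with
  | qf hq =>
      intro hd ρ hv
      rw [val_glue_qf I ω hω0 hω h1 _ hq hd ρ, hv]
      split_ifs <;> rfl
  | @all m B hB ih =>
      intro hd ρ hv
      rw [Form.val] at hv
      have hall : ∀ d, Form.val I B (Fin.snoc ρ d) = 1 := by
        intro d
        have hbd : BddBelow {v : ℝ | ∃ d, v = Form.val I B (Fin.snoc ρ d)} :=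
          ⟨0, by rintro u ⟨e, rfl⟩; exact (val_mem hV I _ _).1⟩
        exact le_antisymm (val_mem hV I _ _).2 (hv ▸ csInf_le hbd ⟨d, rfl⟩)
      erw [Form.val]
      have : {v : ℝ | ∃ d, v = Form.val (I.glue ω h1) B (Fin.snoc ρ d)} = {1} := by
        ext u
        constructor
        · rintro ⟨e, rfl⟩; exact ih hd _ (hall e)
        · rintro rfl
          obtain ⟨d⟩ := I.dom_nonempty
          exact ⟨d, (ih hd _ (hall d)).symm⟩
      rw [this, csInf_singleton]
  | @ex m B hB ih =>
      intro hd ρ hv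
      rw [Form.val] at hv
      obtain ⟨d, hd1⟩ : ∃ d, Form.val I B (Fin.snoc ρ d) = 1 := by
        by_contra h
        push_neg at h
        have hle : sSup {v : ℝ | ∃ d, v = Form.val I B (Fin.snoc ρ d)} ≤ s := by
          refine csSup_le ⟨_, Classical.choice I.dom_nonempty, rfl⟩ ?_
          rintro u ⟨e, rfl⟩
          exact (val_dichotomy hV I s h0s hat _ _).resolve_left (h e)
        rw [hv] at hle
        linarith
      erw [Form.val]
      have hbd : BddAbove {v : ℝ | ∃ d, v = Form.val (I.glue ω h1) B (Fin.snoc ρ d)} :=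
        ⟨1, by rintro u ⟨e, rfl⟩; exact (val_mem hV (I.glue ω h1) _ _).2⟩
      refine le_antisymm (csSup_le ⟨_, d, rfl⟩ ?_) (le_csSup hbd ⟨d, (ih hd _ hd1).symm⟩)
      rintro u ⟨e, rfl⟩
      exact (val_mem hV (I.glue ω h1) _ _).2

end Aux

/-- If the Gödel set `V` has an accumulation point from above
(some `x ∈ V` which is a limit of points of `V` strictly greater than `x`),
and `L` has a unary predicate `P` and a propositional atom `X`, then the
sentence `F = (∀x(P(x)∨X) ⊃ X) ∧ ∀x(((P(x)∨X) ⊃ X) ⊃ (P(x)∨X))` has no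
logically equivalent prenex sentence in `G_V`. -/
theorem stmt_9 {L : Lang} {V : Set ℝ} (hV : GodelSet V)
    (hacc : ∃ x ∈ V, ∀ ε > (0:ℝ), (V ∩ Set.Ioo x (x + ε)).Nonempty)
    (P : L.Rel 1) (X : L.Rel 0) :
    ¬ ∃ Q : Form L 0, IsPrenex Q ∧ DeltaFree Q ∧
        ∀ I : Interp L V,
          Form.sval I
            (Form.conj
              (Form.impl (Form.all (Form.disj (atom1 P (Term.var 0)) (atom0 X)))
                (atom0 X))
              (Form.all (Form.impl
                (Form.impl (Form.disj (atom1 P (Term.var 0)) (atom0 X)) (atom0 X))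
                (Form.disj (atom1 P (Term.var 0)) (atom0 X))))) =
          Form.sval I Q := by
  classical
  rintro ⟨Q, hQpre, hQdf, hQeq⟩
  obtain ⟨x, hxV, hx⟩ := hacc
  have hVI : V ⊆ Set.Icc 0 1 := hV.2.1
  have h1V : (1:ℝ) ∈ V := hV.2.2.2
  have hx01 : x ∈ Set.Icc (0:ℝ) 1 := hVI hxV
  have hx1 : x < 1 := by
    obtain ⟨y, hyV, hy⟩ := hx 1 one_pos
    have := (hVI hyV).2
    linarith [hy.1]
  have hvex : ∀ k : ℕ, ∃ y, y ∈ V ∧ x < y ∧ y < x + min (1/(k+1:ℝ)) ((1-x)/2) := by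
    intro k
    have hpos : (0:ℝ) < min (1/(k+1:ℝ)) ((1-x)/2) := by
      apply lt_min
      · positivity
      · linarith
    obtain ⟨y, hy⟩ := hx _ hpos
    exact ⟨y, hy.1, hy.2.1, hy.2.2⟩
  choose v hvV hvgt hvlt using hvex
  set s : ℝ := (1+x)/2 with hs_def
  have hvs : ∀ k, v k ≤ s := by
    intro k
    have := hvlt k
    have h2 : min (1/(k+1:ℝ)) ((1-x)/2) ≤ (1-x)/2 := min_le_right _ _
    simp only [hs_def]; linarith
  have hxs : x ≤ s := by simp only [hs_def]; linarith
  have hs1 : s < 1 := by simp only [hs_def]; linarith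
  have h0s : (0:ℝ) ≤ s := by simp only [hs_def]; linarith [hx01.1]
  -- the interpretation Iω
  set Iω : Interp L V :=
    { Dom := ℕ
      dom_nonempty := ⟨0⟩
      funMap := fun {k} _ _ => 0
      relVal := fun {k} R w =>
        if h : (⟨k, R⟩ : Σ k, L.Rel k) = ⟨1, P⟩ then
          v (w ⟨0, by have : k = 1 := congrArg Sigma.fst h; omega⟩)
        else x
      relVal_mem := fun {k} R w => by
        split_ifs
        · exact hvV _
        · exact hxV } with hIω_def
  have hrel : ∀ {k} (R : L.Rel k) (w : Fin k → ℕ),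
      Iω.relVal R w =
        if h : (⟨k, R⟩ : Σ k, L.Rel k) = ⟨1, P⟩ then
          v (w ⟨0, by have : k = 1 := congrArg Sigma.fst h; omega⟩)
        else x := fun R w => rfl
  have hrelP : ∀ w : Fin 1 → ℕ, Iω.relVal P w = v (w 0) := by
    intro w
    rw [hrel, dif_pos rfl]
    exact congrArg (fun i => v (w i)) (Subsingleton.elim _ _)
  have hrelX : ∀ w : Fin 0 → ℕ, Iω.relVal X w = x := by
    intro w
    rw [hrel, dif_neg]
    intro h
    exact absurd (congrArg Sigma.fst h) (by simp)
  have hat : ∀ {k} (R : L.Rel k) (w : Fin k → ℕ), Iω.relVal R w ≤ s := by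
    intro k R w
    rw [hrel]
    split_ifs
    · exact hvs _
    · exact hxs
  -- evaluation helpers
  have hsnoc : ∀ (d : ℕ) (j : Fin 1), (Fin.snoc Fin.elim0 d : Fin 1 → ℕ) j = d := by
    intro d j
    rw [Subsingleton.elim j (Fin.last 0)]
    exact Fin.snoc_last _ _
  set D : Form L 1 := Form.disj (atom1 P (Term.var 0)) (atom0 X) with hD_def
  set G : Form L 1 := Form.impl (Form.impl D (atom0 X)) D with hG_def
  set F : Form L 0 := Form.conj (Form.impl (Form.all D) (atom0 X)) (Form.all G) with hF_def
  -- value of D in Iω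
  have hDval : ∀ d : ℕ, Form.val Iω D (Fin.snoc Fin.elim0 d) = v d := by
    intro d
    show max (Iω.relVal P _) (Iω.relVal X _) = v d
    rw [hrelP, hrelX]
    show max (v ((fun j => Term.eval Iω (Fin.snoc Fin.elim0 d) (Term.var 0)) 0)) x = v d
    show max (v ((Fin.snoc Fin.elim0 d : Fin 1 → ℕ) 0)) x = v d
    rw [hsnoc d 0]
    exact max_eq_left (le_of_lt (hvgt d))
  have hXval : ∀ (n : ℕ) (ρ : Fin n → ℕ), Form.val Iω (atom0 X (L := L)) ρ = x := by
    intro n ρ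
    exact hrelX _
  -- sInf of the D-values is x
  have hinfD : sInf {u : ℝ | ∃ d : ℕ, u = Form.val Iω D (Fin.snoc Fin.elim0 d)} = x := by
    have hbd : BddBelow {u : ℝ | ∃ d : ℕ, u = Form.val Iω D (Fin.snoc Fin.elim0 d)} :=
      ⟨x, by rintro u ⟨e, rfl⟩; rw [hDval e]; exact le_of_lt (hvgt e)⟩
    refine le_antisymm ?_ (le_csInf ⟨_, 0, rfl⟩ ?_)
    · apply le_of_forall_pos_le_add
      intro ε hε
      obtain ⟨k, hk⟩ := exists_nat_one_div_lt hε
      have h1 : sInf {u : ℝ | ∃ d : ℕ, u = Form.val Iω D (Fin.snoc Fin.elim0 d)} ≤ v k :=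
        csInf_le hbd ⟨k, (hDval k).symm⟩
      have h2 : v k < x + min (1/(k+1:ℝ)) ((1-x)/2) := hvlt k
      have h3 : min (1/(k+1:ℝ)) ((1-x)/2) ≤ 1/(k+1) := min_le_left _ _
      linarith
    · rintro u ⟨e, rfl⟩
      rw [hDval e]
      exact le_of_lt (hvgt e)
  -- F evaluates to 1 in Iω
  have hFω : Form.sval Iω F = 1 := by
    have hc1 : Form.val Iω (Form.impl (Form.all D) (atom0 X)) Fin.elim0 = 1 := by
      show (if Form.val Iω (Form.all D) Fin.elim0 ≤ Form.val Iω (atom0 X) Fin.elim0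
            then (1:ℝ) else _) = 1
      rw [if_pos]
      show Form.val Iω (Form.all D) Fin.elim0 ≤ Form.val Iω (atom0 X) Fin.elim0
      rw [hXval]
      show sInf _ ≤ x
      rw [hinfD]
    have hGval : ∀ d : ℕ, Form.val Iω G (Fin.snoc Fin.elim0 d) = 1 := by
      intro d
      have hin : Form.val Iω (Form.impl D (atom0 X)) (Fin.snoc Fin.elim0 d) = x := by
        show (if Form.val Iω D _ ≤ Form.val Iω (atom0 X) _ then (1:ℝ)
              else Form.val Iω (atom0 X) _) = x
        rw [hXval, hDval, if_neg (not_le.mpr (hvgt d))]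
      show (if Form.val Iω (Form.impl D (atom0 X)) _ ≤ Form.val Iω D _ then (1:ℝ)
            else _) = 1
      rw [if_pos]
      rw [hin, hDval]
      exact le_of_lt (hvgt d)
    have hc2 : Form.val Iω (Form.all G) Fin.elim0 = 1 := by
      show sInf {u : ℝ | ∃ d : ℕ, u = Form.val Iω G (Fin.snoc Fin.elim0 d)} = 1
      have : {u : ℝ | ∃ d : ℕ, u = Form.val Iω G (Fin.snoc Fin.elim0 d)} = {1} := by
        ext u
        constructor
        · rintro ⟨e, rfl⟩; exact hGval e
        · rintro rfl; exact ⟨0, (hGval 0).symm⟩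
      rw [this, csInf_singleton]
    show min (Form.val Iω (Form.impl (Form.all D) (atom0 X)) Fin.elim0)
        (Form.val Iω (Form.all G) Fin.elim0) = 1
    rw [hc1, hc2, min_self]
  -- hence Q evaluates to 1 in Iω
  have hQω : Form.sval Iω Q = 1 := by rw [← hQeq Iω]; exact hFω
  -- the glued interpretation
  set J : Interp L V := Iω.glue x h1V with hJ_def
  have hJQ : Form.sval J Q = 1 :=
    prenex_glue hVI Iω s x h0s hs1 hx01.1 hx1 h1V hat hQpre hQdf Fin.elim0 hQω
  -- values of atoms in J
  have hJrel : ∀ {k} (R : L.Rel k) (w : Fin k → ℕ),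
      J.relVal R w = if Iω.relVal R w ≤ x then Iω.relVal R w else 1 :=
    fun R w => rfl
  have hJP : ∀ w : Fin 1 → ℕ, J.relVal P w = 1 := by
    intro w
    rw [hJrel, if_neg (not_le.mpr (by rw [hrelP]; exact hvgt _))]
  have hJX : ∀ w : Fin 0 → ℕ, J.relVal X w = x := by
    intro w
    rw [hJrel, hrelX, if_pos le_rfl]
  have hJXval : ∀ (n : ℕ) (ρ : Fin n → ℕ), Form.val J (atom0 X (L := L)) ρ = x := by
    intro n ρ
    exact hJX _
  have hJDval : ∀ d : ℕ, Form.val J D (Fin.snoc Fin.elim0 d) = 1 := by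
    intro d
    show max (J.relVal P _) (J.relVal X _) = 1
    erw [hJP, hJX]
    exact max_eq_left hx01.2
  -- F evaluates to x in J
  have hJF : Form.sval J F = x := by
    have hinfJD : Form.val J (Form.all D) Fin.elim0 = 1 := by
      show sInf {u : ℝ | ∃ d : ℕ, u = Form.val J D (Fin.snoc Fin.elim0 d)} = 1
      have : {u : ℝ | ∃ d : ℕ, u = Form.val J D (Fin.snoc Fin.elim0 d)} = {1} := by
        ext u
        constructor
        · rintro ⟨e, rfl⟩; exact hJDval e
        · rintro rfl; exact ⟨0, (hJDval 0).symm⟩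
      rw [this, csInf_singleton]
    have hc1 : Form.val J (Form.impl (Form.all D) (atom0 X)) Fin.elim0 = x := by
      show (if Form.val J (Form.all D) Fin.elim0 ≤ Form.val J (atom0 X) Fin.elim0
            then (1:ℝ) else Form.val J (atom0 X) Fin.elim0) = x
      erw [hinfJD, hJXval, if_neg (not_le.mpr hx1)]
    have hJGval : ∀ d : ℕ, Form.val J G (Fin.snoc Fin.elim0 d) = 1 := by
      intro d
      have hin : Form.val J (Form.impl D (atom0 X)) (Fin.snoc Fin.elim0 d) = x := by
        show (if Form.val J D _ ≤ Form.val J (atom0 X) _ then (1:ℝ)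
              else Form.val J (atom0 X) _) = x
        erw [hJXval, hJDval, if_neg (not_le.mpr hx1)]
      show (if Form.val J (Form.impl D (atom0 X)) _ ≤ Form.val J D _ then (1:ℝ)
            else _) = 1
      rw [if_pos]
      rw [hin, hJDval]
      exact hx01.2
    have hc2 : Form.val J (Form.all G) Fin.elim0 = 1 := by
      show sInf {u : ℝ | ∃ d : ℕ, u = Form.val J G (Fin.snoc Fin.elim0 d)} = 1
      have : {u : ℝ | ∃ d : ℕ, u = Form.val J G (Fin.snoc Fin.elim0 d)} = {1} := by
        ext u
        constructor
        · rintro ⟨e, rfl⟩; exact hJGval e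
        · rintro rfl; exact ⟨0, (hJGval 0).symm⟩
      rw [this, csInf_singleton]
    show min (Form.val J (Form.impl (Form.all D) (atom0 X)) Fin.elim0)
        (Form.val J (Form.all G) Fin.elim0) = x
    rw [hc1, hc2]
    exact min_eq_left hx01.2
  have : (x:ℝ) = 1 := by rw [← hJF, hQeq J, hJQ]
  linarith

end GodelPaper
end

section
/- In the Gödel logic G_{V_↑}, every L-sentence has a logically equivalent prenex L-sentence: for every sentence A there is a prenex sentence P with I(A)=I(P) for all V_↑-interpretations I. -/
namespace GodelPaper

/-! ### Auxiliary lemmas for stmt_11 -/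

section Aux

lemma zero_mem_vup : (0:ℝ) ∈ Vup := Or.inl ⟨1, le_refl 1, by norm_num⟩

lemma one_mem_vup : (1:ℝ) ∈ Vup := Or.inr rfl

lemma vup_nonneg {x : ℝ} (h : x ∈ Vup) : 0 ≤ x := by
  rcases h with ⟨k, hk, rfl⟩ | h
  · have hk1 : (1:ℝ) ≤ (k:ℝ) := by exact_mod_cast hk
    have : 1/(k:ℝ) ≤ 1 := by
      rw [div_le_one (by linarith)]; linarith
    linarith
  · simp only [Set.mem_singleton_iff] at h; simp [h]

lemma vup_le_one {x : ℝ} (h : x ∈ Vup) : x ≤ 1 := by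
  rcases h with ⟨k, hk, rfl⟩ | h
  · have hk1 : (1:ℝ) ≤ (k:ℝ) := by exact_mod_cast hk
    have : 0 ≤ 1/(k:ℝ) := by positivity
    linarith
  · simp only [Set.mem_singleton_iff] at h; simp [h]

lemma vup_csInf_mem {S : Set ℝ} (hS : S ⊆ Vup) (hne : S.Nonempty) : sInf S ∈ S := by
  by_cases hT : {k : ℕ | 1 ≤ k ∧ (1 - 1/(k:ℝ)) ∈ S}.Nonempty
  · have hk₀ := Nat.sInf_mem hT
    set k₀ := sInf {k : ℕ | 1 ≤ k ∧ (1 - 1/(k:ℝ)) ∈ S} with hk₀def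
    have hmin : sInf S = 1 - 1/(k₀:ℝ) := by
      apply le_antisymm
      · exact csInf_le ⟨0, fun y hy => vup_nonneg (hS hy)⟩ hk₀.2
      · apply le_csInf hne
        intro y hy
        have hk₀1 : (1:ℝ) ≤ (k₀:ℝ) := by exact_mod_cast hk₀.1
        rcases hS hy with ⟨k, hk1, rfl⟩ | h
        · have hle : k₀ ≤ k := Nat.sInf_le ⟨hk1, hy⟩
          have hleR : (k₀:ℝ) ≤ (k:ℝ) := by exact_mod_cast hle
          have : 1/(k:ℝ) ≤ 1/(k₀:ℝ) :=
            one_div_le_one_div_of_le (by linarith) hleR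
          linarith
        · simp only [Set.mem_singleton_iff] at h
          have : 0 < 1/(k₀:ℝ) := by positivity
          rw [h]; linarith
    rw [hmin]; exact hk₀.2
  · have hsub : S ⊆ {1} := by
      intro y hy
      rcases hS hy with ⟨k, hk, rfl⟩ | h
      · exact absurd ⟨k, hk, hy⟩ hT
      · exact h
    have hS1 : S = {1} :=
      ((Set.subset_singleton_iff_eq).mp hsub).resolve_left
        (Set.nonempty_iff_ne_empty.mp hne)
    rw [hS1, csInf_singleton]; simp

lemma vup_csSup_mem_or {S : Set ℝ} (hS : S ⊆ Vup) (hne : S.Nonempty) :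
    sSup S ∈ S ∨ sSup S = 1 := by
  by_cases h1 : sSup S = 1
  · exact Or.inr h1
  have hbdd : BddAbove S := ⟨1, fun y hy => vup_le_one (hS hy)⟩
  have hub : sSup S ≤ 1 := csSup_le hne fun y hy => vup_le_one (hS hy)
  have hlt : sSup S < 1 := lt_of_le_of_ne hub h1
  have hpos : 0 < 1 - sSup S := by linarith
  set N := ⌈(1:ℝ)/(1 - sSup S)⌉₊ with hN
  have hfin : S.Finite := by
    apply Set.Finite.subset (Set.Finite.image (fun k : ℕ => 1 - 1/(k:ℝ)) (Set.finite_Iic N))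
    intro y hy
    have hyle : y ≤ sSup S := le_csSup hbdd hy
    rcases hS hy with ⟨k, hk, rfl⟩ | h
    · refine ⟨k, ?_, rfl⟩
      have hkpos : (0:ℝ) < (k:ℝ) := by exact_mod_cast hk
      have h2 : 1 - sSup S ≤ 1/(k:ℝ) := by linarith
      have h3 : (k:ℝ) ≤ 1/(1 - sSup S) := by
        rw [le_div_iff₀ hpos]
        calc (k:ℝ) * (1 - sSup S) ≤ (k:ℝ) * (1/(k:ℝ)) :=
              mul_le_mul_of_nonneg_left h2 (le_of_lt hkpos)
          _ = 1 := by field_simp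
      have h4 : (k:ℝ) ≤ (N:ℝ) := le_trans h3 (Nat.le_ceil _)
      exact_mod_cast h4
    · simp only [Set.mem_singleton_iff] at h
      rw [h] at hyle; linarith
  exact Or.inl (Set.Nonempty.csSup_mem hne hfin)

end Aux
section Aux2

variable {L : Lang}

lemma Term.eval_rename {V : Set ℝ} (I : Interp L V) {α β : Type} (f : α → β)
    (v : β → I.Dom) : ∀ t : Term L α, (t.rename f).eval I v = t.eval I (v ∘ f)
  | .var i => rfl
  | .func g ts => by
      simp only [Term.rename, Term.eval]
      congr 1
      funext j
      exact Term.eval_rename I f v (ts j)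

lemma snoc_comp_lastCases {V : Set ℝ} (I : Interp L V) {m n : ℕ} (f : Fin m → Fin n)
    (ρ : Fin n → I.Dom) (d : I.Dom) :
    (Fin.snoc ρ d : Fin (n+1) → I.Dom) ∘
      (Fin.lastCases (Fin.last n) fun i => Fin.castSucc (f i) : Fin (m+1) → Fin (n+1))
      = Fin.snoc (ρ ∘ f) d := by
  funext x
  refine Fin.lastCases ?_ ?_ x
  · simp [Fin.lastCases_last, Fin.snoc_last]
  · intro i
    simp [Fin.lastCases_castSucc, Fin.snoc_castSucc]

lemma Form.val_rename {V : Set ℝ} (I : Interp L V) :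
    ∀ {m n : ℕ} (f : Fin m → Fin n) (A : Form L m) (ρ : Fin n → I.Dom),
      (A.rename f).val I ρ = A.val I (ρ ∘ f) := by
  intro m n f A
  induction A generalizing n with
  | falsum => intro ρ; rfl
  | atom R ts =>
      intro ρ
      simp only [Form.rename, Form.val]
      congr 1
      funext j
      exact Term.eval_rename I f ρ (ts j)
  | conj A B ihA ihB => intro ρ; simp only [Form.rename, Form.val, ihA, ihB]
  | disj A B ihA ihB => intro ρ; simp only [Form.rename, Form.val, ihA, ihB]
  | impl A B ihA ihB => intro ρ; simp only [Form.rename, Form.val, ihA, ihB]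
  | delta A ihA => intro ρ; simp only [Form.rename, Form.val, ihA]
  | all A ihA =>
      intro ρ
      simp only [Form.rename, Form.val]
      congr 1
      ext v
      constructor
      · rintro ⟨d, rfl⟩
        exact ⟨d, by rw [ihA, snoc_comp_lastCases]⟩
      · rintro ⟨d, rfl⟩
        exact ⟨d, by rw [ihA, snoc_comp_lastCases]⟩
  | ex A ihA =>
      intro ρ
      simp only [Form.rename, Form.val]
      congr 1
      ext v
      constructor
      · rintro ⟨d, rfl⟩
        exact ⟨d, by rw [ihA, snoc_comp_lastCases]⟩
      · rintro ⟨d, rfl⟩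
        exact ⟨d, by rw [ihA, snoc_comp_lastCases]⟩

lemma Form.val_lift {V : Set ℝ} (I : Interp L V) {n : ℕ} (A : Form L n)
    (ρ : Fin n → I.Dom) (d : I.Dom) :
    (A.lift).val I (Fin.snoc ρ d) = A.val I ρ := by
  rw [Form.lift, Form.val_rename]
  congr 1
  funext i
  simp [Fin.snoc_castSucc]

lemma quantFree_rename {m : ℕ} (A : Form L m) :
    ∀ {n : ℕ} (f : Fin m → Fin n), QuantFree A → QuantFree (A.rename f) := by
  induction A with
  | falsum => intro n f h; trivial
  | atom R ts => intro n f h; trivial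
  | conj A B ihA ihB => intro n f h; exact ⟨ihA f h.1, ihB f h.2⟩
  | disj A B ihA ihB => intro n f h; exact ⟨ihA f h.1, ihB f h.2⟩
  | impl A B ihA ihB => intro n f h; exact ⟨ihA f h.1, ihB f h.2⟩
  | delta A ihA => intro n f h; exact ihA _ h
  | all A ihA => intro n f h; exact h.elim
  | ex A ihA => intro n f h; exact h.elim

lemma deltaFree_rename {m : ℕ} (A : Form L m) :
    ∀ {n : ℕ} (f : Fin m → Fin n), DeltaFree A → DeltaFree (A.rename f) := by
  induction A with
  | falsum => intro n f h; trivial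
  | atom R ts => intro n f h; trivial
  | conj A B ihA ihB => intro n f h; exact ⟨ihA f h.1, ihB f h.2⟩
  | disj A B ihA ihB => intro n f h; exact ⟨ihA f h.1, ihB f h.2⟩
  | impl A B ihA ihB => intro n f h; exact ⟨ihA f h.1, ihB f h.2⟩
  | delta A ihA => intro n f h; exact h.elim
  | all A ihA => intro n f h; exact ihA _ h
  | ex A ihA => intro n f h; exact ihA _ h

lemma isPrenex_rename {m : ℕ} {A : Form L m} (hA : IsPrenex A) :
    ∀ {n : ℕ} (f : Fin m → Fin n), IsPrenex (A.rename f) := by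
  induction hA with
  | qf h => intro n f; exact .qf (quantFree_rename _ f h)
  | all h ih => intro n f; exact .all (ih _)
  | ex h ih => intro n f; exact .ex (ih _)

/-- Values of formulas over a `Vup`-interpretation lie in `Vup`. -/
lemma Form.val_mem_vup (I : Interp L Vup) :
    ∀ {n : ℕ} (A : Form L n) (ρ : Fin n → I.Dom), A.val I ρ ∈ Vup := by
  intro n A
  induction A with
  | falsum => intro ρ; exact zero_mem_vup
  | atom R ts => intro ρ; exact I.relVal_mem R _
  | conj A B ihA ihB =>
      intro ρ
      simp only [Form.val]
      rcases le_total (A.val I ρ) (B.val I ρ) with h | h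
      · rw [min_eq_left h]; exact ihA ρ
      · rw [min_eq_right h]; exact ihB ρ
  | disj A B ihA ihB =>
      intro ρ
      simp only [Form.val]
      rcases le_total (A.val I ρ) (B.val I ρ) with h | h
      · rw [max_eq_right h]; exact ihB ρ
      · rw [max_eq_left h]; exact ihA ρ
  | impl A B ihA ihB =>
      intro ρ
      simp only [Form.val]
      split
      · exact one_mem_vup
      · exact ihB ρ
  | delta A ihA =>
      intro ρ
      simp only [Form.val]
      split
      · exact one_mem_vup
      · exact zero_mem_vup
  | all A ihA =>
      intro ρ
      simp only [Form.val]
      have hsub : {v : ℝ | ∃ d : I.Dom, v = A.val I (Fin.snoc ρ d)} ⊆ Vup := by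
        rintro v ⟨d, rfl⟩; exact ihA _
      have hne : {v : ℝ | ∃ d : I.Dom, v = A.val I (Fin.snoc ρ d)}.Nonempty := by
        obtain ⟨d⟩ := I.dom_nonempty
        exact ⟨_, d, rfl⟩
      exact hsub (vup_csInf_mem hsub hne)
  | ex A ihA =>
      intro ρ
      simp only [Form.val]
      have hsub : {v : ℝ | ∃ d : I.Dom, v = A.val I (Fin.snoc ρ d)} ⊆ Vup := by
        rintro v ⟨d, rfl⟩; exact ihA _
      have hne : {v : ℝ | ∃ d : I.Dom, v = A.val I (Fin.snoc ρ d)}.Nonempty := by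
        obtain ⟨d⟩ := I.dom_nonempty
        exact ⟨_, d, rfl⟩
      rcases vup_csSup_mem_or hsub hne with h | h
      · exact hsub h
      · rw [h]; exact one_mem_vup

end Aux2
section RealLemmas

variable {D : Type} [Nonempty D]

lemma sv_ne (f : D → ℝ) : Set.Nonempty {v : ℝ | ∃ d, v = f d} :=
  ⟨f (Classical.arbitrary D), Classical.arbitrary D, rfl⟩

lemma sv_bddBelow {f : D → ℝ} (h : ∀ d, 0 ≤ f d) : BddBelow {v : ℝ | ∃ d, v = f d} :=
  ⟨0, by rintro v ⟨d, rfl⟩; exact h d⟩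

lemma sv_bddAbove {f : D → ℝ} (h : ∀ d, f d ≤ 1) : BddAbove {v : ℝ | ∃ d, v = f d} :=
  ⟨1, by rintro v ⟨d, rfl⟩; exact h d⟩

lemma sv_inf_le {f : D → ℝ} (h : ∀ d, 0 ≤ f d) (d : D) :
    sInf {v : ℝ | ∃ d, v = f d} ≤ f d :=
  csInf_le (sv_bddBelow h) ⟨d, rfl⟩

lemma sv_le_inf {f : D → ℝ} {c : ℝ} (h : ∀ d, c ≤ f d) :
    c ≤ sInf {v : ℝ | ∃ d, v = f d} :=
  le_csInf (sv_ne f) (by rintro v ⟨d, rfl⟩; exact h d)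

lemma sv_le_sup {f : D → ℝ} (h : ∀ d, f d ≤ 1) (d : D) :
    f d ≤ sSup {v : ℝ | ∃ d, v = f d} :=
  le_csSup (sv_bddAbove h) ⟨d, rfl⟩

lemma sv_sup_le {f : D → ℝ} {c : ℝ} (h : ∀ d, f d ≤ c) :
    sSup {v : ℝ | ∃ d, v = f d} ≤ c :=
  csSup_le (sv_ne f) (by rintro v ⟨d, rfl⟩; exact h d)

lemma sv_congr {g h : D → ℝ} (e : ∀ d, g d = h d) :
    {v : ℝ | ∃ d, v = g d} = {v : ℝ | ∃ d, v = h d} :=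
  Set.ext fun v => exists_congr fun d => by rw [e d]

lemma sv_const (b : ℝ) : {v : ℝ | ∃ _ : D, v = b} = {b} :=
  Set.ext fun v => ⟨fun ⟨_, h⟩ => h, fun h => ⟨Classical.arbitrary D, h⟩⟩

lemma sv_inf_attained {f : D → ℝ} (hf : ∀ d, f d ∈ Vup) :
    ∃ d, sInf {v : ℝ | ∃ d, v = f d} = f d :=
  vup_csInf_mem (by rintro v ⟨d, rfl⟩; exact hf d) (sv_ne f)

lemma sv_sup_cases {f : D → ℝ} (hf : ∀ d, f d ∈ Vup) :
    (∃ d, sSup {v : ℝ | ∃ d, v = f d} = f d) ∨ sSup {v : ℝ | ∃ d, v = f d} = 1 :=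
  vup_csSup_mem_or (by rintro v ⟨d, rfl⟩; exact hf d) (sv_ne f)

variable {f : D → ℝ} {b : ℝ}

lemma R1 (hf : ∀ d, f d ∈ Vup) (hb : b ∈ Vup) :
    sInf {v : ℝ | ∃ d, v = min (f d) b} = min (sInf {v : ℝ | ∃ d, v = f d}) b := by
  have h0 : ∀ d, 0 ≤ f d := fun d => vup_nonneg (hf d)
  have h0' : ∀ d, 0 ≤ min (f d) b := fun d => le_min (h0 d) (vup_nonneg hb)
  obtain ⟨d₀, hd₀⟩ := sv_inf_attained hf
  apply le_antisymm
  · rw [hd₀]; exact sv_inf_le h0' d₀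
  · exact sv_le_inf fun d => min_le_min (sv_inf_le h0 d) le_rfl

lemma R1' (hf : ∀ d, f d ∈ Vup) (hb : b ∈ Vup) :
    sInf {v : ℝ | ∃ d, v = min b (f d)} = min b (sInf {v : ℝ | ∃ d, v = f d}) := by
  rw [sv_congr (fun d => min_comm b (f d)), R1 hf hb, min_comm]

lemma R2 (hf : ∀ d, f d ∈ Vup) (hb : b ∈ Vup) :
    sInf {v : ℝ | ∃ d, v = max (f d) b} = max (sInf {v : ℝ | ∃ d, v = f d}) b := by
  have h0 : ∀ d, 0 ≤ f d := fun d => vup_nonneg (hf d)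
  have h0' : ∀ d, 0 ≤ max (f d) b := fun d => le_max_of_le_left (h0 d)
  obtain ⟨d₀, hd₀⟩ := sv_inf_attained hf
  apply le_antisymm
  · rw [hd₀]; exact sv_inf_le h0' d₀
  · exact sv_le_inf fun d => max_le_max (sv_inf_le h0 d) le_rfl

lemma R2' (hf : ∀ d, f d ∈ Vup) (hb : b ∈ Vup) :
    sInf {v : ℝ | ∃ d, v = max b (f d)} = max b (sInf {v : ℝ | ∃ d, v = f d}) := by
  rw [sv_congr (fun d => max_comm b (f d)), R2 hf hb, max_comm]

lemma R3 (hf : ∀ d, f d ∈ Vup) (hb : b ∈ Vup) :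
    sSup {v : ℝ | ∃ d, v = min (f d) b} = min (sSup {v : ℝ | ∃ d, v = f d}) b := by
  have h1 : ∀ d, f d ≤ 1 := fun d => vup_le_one (hf d)
  have h1' : ∀ d, min (f d) b ≤ 1 := fun d => le_trans (min_le_left _ _) (h1 d)
  apply le_antisymm
  · exact sv_sup_le fun d => min_le_min (sv_le_sup h1 d) le_rfl
  · by_contra hlt
    push_neg at hlt
    have hs : sSup {v : ℝ | ∃ d, v = min (f d) b} < sSup {v : ℝ | ∃ d, v = f d} :=
      lt_of_lt_of_le hlt (min_le_left _ _)
    have hb' : sSup {v : ℝ | ∃ d, v = min (f d) b} < b :=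
      lt_of_lt_of_le hlt (min_le_right _ _)
    obtain ⟨v, ⟨d, rfl⟩, hv⟩ := exists_lt_of_lt_csSup (sv_ne f) hs
    have := sv_le_sup h1' d
    have : sSup {v : ℝ | ∃ d, v = min (f d) b} < min (f d) b := lt_min hv hb'
    linarith [sv_le_sup h1' d]

lemma R3' (hf : ∀ d, f d ∈ Vup) (hb : b ∈ Vup) :
    sSup {v : ℝ | ∃ d, v = min b (f d)} = min b (sSup {v : ℝ | ∃ d, v = f d}) := by
  rw [sv_congr (fun d => min_comm b (f d)), R3 hf hb, min_comm]

lemma R4 (hf : ∀ d, f d ∈ Vup) (hb : b ∈ Vup) :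
    sSup {v : ℝ | ∃ d, v = max (f d) b} = max (sSup {v : ℝ | ∃ d, v = f d}) b := by
  have h1 : ∀ d, f d ≤ 1 := fun d => vup_le_one (hf d)
  have h1' : ∀ d, max (f d) b ≤ 1 := fun d => max_le (h1 d) (vup_le_one hb)
  apply le_antisymm
  · exact sv_sup_le fun d => max_le_max (sv_le_sup h1 d) le_rfl
  · apply max_le
    · exact sv_sup_le fun d => le_trans (le_max_left _ _) (sv_le_sup h1' d)
    · exact le_trans (le_max_right (f (Classical.arbitrary D)) b)
        (sv_le_sup h1' (Classical.arbitrary D))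

lemma R4' (hf : ∀ d, f d ∈ Vup) (hb : b ∈ Vup) :
    sSup {v : ℝ | ∃ d, v = max b (f d)} = max b (sSup {v : ℝ | ∃ d, v = f d}) := by
  rw [sv_congr (fun d => max_comm b (f d)), R4 hf hb, max_comm]

lemma R5 (hf : ∀ d, f d ∈ Vup) (hb : b ∈ Vup) :
    sSup {v : ℝ | ∃ d, v = if f d ≤ b then 1 else b}
      = if sInf {v : ℝ | ∃ d, v = f d} ≤ b then 1 else b := by
  have h0 : ∀ d, 0 ≤ f d := fun d => vup_nonneg (hf d)
  have hb1 : b ≤ 1 := vup_le_one hb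
  have hub : ∀ d, (if f d ≤ b then 1 else b) ≤ 1 := by
    intro d; split_ifs; exacts [le_rfl, hb1]
  obtain ⟨d₀, hd₀⟩ := sv_inf_attained hf
  by_cases h : sInf {v : ℝ | ∃ d, v = f d} ≤ b
  · rw [if_pos h]
    apply le_antisymm (sv_sup_le hub)
    have : (if f d₀ ≤ b then 1 else b) = 1 := if_pos (by rw [← hd₀]; exact h)
    calc (1:ℝ) = if f d₀ ≤ b then 1 else b := this.symm
      _ ≤ _ := sv_le_sup hub d₀
  · rw [if_neg h]
    have hterm : ∀ d, (if f d ≤ b then 1 else b) = b := by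
      intro d
      exact if_neg (not_le.mpr (lt_of_lt_of_le (not_le.mp h) (sv_inf_le h0 d)))
    rw [sv_congr hterm, sv_const, csSup_singleton]

lemma R6 (hf : ∀ d, f d ∈ Vup) (hb : b ∈ Vup) :
    sInf {v : ℝ | ∃ d, v = if f d ≤ b then 1 else b}
      = if sSup {v : ℝ | ∃ d, v = f d} ≤ b then 1 else b := by
  have h1 : ∀ d, f d ≤ 1 := fun d => vup_le_one (hf d)
  have hb1 : b ≤ 1 := vup_le_one hb
  by_cases h : sSup {v : ℝ | ∃ d, v = f d} ≤ b
  · rw [if_pos h]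
    have hterm : ∀ d, (if f d ≤ b then 1 else b) = (1:ℝ) :=
      fun d => if_pos (le_trans (sv_le_sup h1 d) h)
    rw [sv_congr hterm, sv_const, csInf_singleton]
  · rw [if_neg h]
    obtain ⟨v, ⟨d, rfl⟩, hv⟩ := exists_lt_of_lt_csSup (sv_ne f) (not_le.mp h)
    apply le_antisymm
    · apply csInf_le
      · exact ⟨b, by rintro v ⟨d', rfl⟩; split_ifs; exacts [hb1, le_rfl]⟩
      · exact ⟨d, (if_neg (not_le.mpr hv)).symm⟩
    · exact sv_le_inf fun d' => by split_ifs; exacts [hb1, le_rfl]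

lemma R7 (hf : ∀ d, f d ∈ Vup) (hb : b ∈ Vup) :
    sInf {v : ℝ | ∃ d, v = if b ≤ f d then 1 else f d}
      = if b ≤ sInf {v : ℝ | ∃ d, v = f d} then 1 else sInf {v : ℝ | ∃ d, v = f d} := by
  have h0 : ∀ d, 0 ≤ f d := fun d => vup_nonneg (hf d)
  obtain ⟨d₀, hd₀⟩ := sv_inf_attained hf
  by_cases h : b ≤ sInf {v : ℝ | ∃ d, v = f d}
  · rw [if_pos h]
    have hterm : ∀ d, (if b ≤ f d then 1 else f d) = (1:ℝ) :=
      fun d => if_pos (le_trans h (sv_inf_le h0 d))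
    rw [sv_congr hterm, sv_const, csInf_singleton]
  · rw [if_neg h]
    have hlt : sInf {v : ℝ | ∃ d, v = f d} < b := not_le.mp h
    apply le_antisymm
    · apply csInf_le
      · exact ⟨0, by rintro v ⟨d', rfl⟩; split_ifs; exacts [zero_le_one, h0 d']⟩
      · exact ⟨d₀, by rw [if_neg (not_le.mpr (by rw [← hd₀]; exact hlt))]; exact hd₀⟩
    · apply sv_le_inf
      intro d
      split_ifs
      · rw [hd₀]; exact vup_le_one (hf d₀)
      · exact sv_inf_le h0 d

lemma R8 (hf : ∀ d, f d ∈ Vup) (hb : b ∈ Vup) :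
    sSup {v : ℝ | ∃ d, v = if b ≤ f d then 1 else f d}
      = if b ≤ sSup {v : ℝ | ∃ d, v = f d} then 1 else sSup {v : ℝ | ∃ d, v = f d} := by
  have h1 : ∀ d, f d ≤ 1 := fun d => vup_le_one (hf d)
  have hub : ∀ d, (if b ≤ f d then 1 else f d) ≤ 1 := by
    intro d; split_ifs; exacts [le_rfl, h1 d]
  by_cases hex : ∃ d, b ≤ f d
  · obtain ⟨d, hd⟩ := hex
    rw [if_pos (le_trans hd (sv_le_sup h1 d))]
    apply le_antisymm (sv_sup_le hub)
    calc (1:ℝ) = if b ≤ f d then 1 else f d := (if_pos hd).symm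
      _ ≤ _ := sv_le_sup hub d
  · push_neg at hex
    have hterm : ∀ d, (if b ≤ f d then 1 else f d) = f d :=
      fun d => if_neg (not_le.mpr (hex d))
    rw [sv_congr hterm]
    by_cases h2 : b ≤ sSup {v : ℝ | ∃ d, v = f d}
    · rw [if_pos h2]
      rcases sv_sup_cases hf with ⟨d, hd⟩ | hone
      · exact absurd (hd ▸ h2) (not_le.mpr (hex d))
      · exact hone
    · rw [if_neg h2]

end RealLemmas
section Combinators

variable {L : Lang}

/-- Equivalence of formulas over all `Vup`-interpretations. -/
def Eqv {n : ℕ} (A B : Form L n) : Prop :=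
  ∀ (I : Interp L Vup) (ρ : Fin n → I.Dom), A.val I ρ = B.val I ρ

/-- A quantifier selected by a boolean: `true ↦ ∀`, `false ↦ ∃`. -/
def quant {n : ℕ} : Bool → Form L (n+1) → Form L n
  | true, A => A.all
  | false, A => A.ex

lemma isPrenex_quant (q : Bool) {n : ℕ} {A : Form L (n+1)} (h : IsPrenex A) :
    IsPrenex (quant q A) := by
  cases q
  · exact .ex h
  · exact .all h

lemma deltaFree_quant (q : Bool) {n : ℕ} {A : Form L (n+1)} (h : DeltaFree A) :
    DeltaFree (quant q A) := by
  cases q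
  · exact h
  · exact h

lemma eqv_quant_congr (q : Bool) {n : ℕ} {A B : Form L (n+1)} (h : Eqv A B) :
    Eqv (quant q A) (quant q B) := by
  intro I ρ
  haveI := I.dom_nonempty
  cases q <;>
    · simp only [quant, Form.val]
      congr 1
      exact sv_congr fun d => h I (Fin.snoc ρ d)

lemma eqv_conj_congr {n : ℕ} {A A' B B' : Form L n} (h1 : Eqv A A') (h2 : Eqv B B') :
    Eqv (A.conj B) (A'.conj B') := fun I ρ => by
  simp only [Form.val, h1 I ρ, h2 I ρ]

lemma eqv_disj_congr {n : ℕ} {A A' B B' : Form L n} (h1 : Eqv A A') (h2 : Eqv B B') :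
    Eqv (A.disj B) (A'.disj B') := fun I ρ => by
  simp only [Form.val, h1 I ρ, h2 I ρ]

lemma eqv_impl_congr {n : ℕ} {A A' B B' : Form L n} (h1 : Eqv A A') (h2 : Eqv B B') :
    Eqv (A.impl B) (A'.impl B') := fun I ρ => by
  simp only [Form.val, h1 I ρ, h2 I ρ]

lemma eqv_all_congr {n : ℕ} {A B : Form L (n+1)} (h : Eqv A B) :
    Eqv A.all B.all := eqv_quant_congr true h

lemma eqv_ex_congr {n : ℕ} {A B : Form L (n+1)} (h : Eqv A B) :
    Eqv A.ex B.ex := eqv_quant_congr false h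

lemma shift_conj_left {n : ℕ} (q : Bool) (A : Form L (n+1)) (B : Form L n) :
    ∃ q', Eqv (Form.conj (quant q A) B) (quant q' (Form.conj A B.lift)) := by
  refine ⟨q, fun I ρ => ?_⟩
  haveI := I.dom_nonempty
  cases q
  · simp only [quant, Form.val, Form.val_lift]
    exact (R3 (fun d => Form.val_mem_vup I A _) (Form.val_mem_vup I B ρ)).symm
  · simp only [quant, Form.val, Form.val_lift]
    exact (R1 (fun d => Form.val_mem_vup I A _) (Form.val_mem_vup I B ρ)).symm

lemma shift_conj_right {n : ℕ} (q : Bool) (A : Form L n) (B : Form L (n+1)) :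
    ∃ q', Eqv (Form.conj A (quant q B)) (quant q' (Form.conj A.lift B)) := by
  refine ⟨q, fun I ρ => ?_⟩
  haveI := I.dom_nonempty
  cases q
  · simp only [quant, Form.val, Form.val_lift]
    exact (R3' (fun d => Form.val_mem_vup I B _) (Form.val_mem_vup I A ρ)).symm
  · simp only [quant, Form.val, Form.val_lift]
    exact (R1' (fun d => Form.val_mem_vup I B _) (Form.val_mem_vup I A ρ)).symm

lemma shift_disj_left {n : ℕ} (q : Bool) (A : Form L (n+1)) (B : Form L n) :
    ∃ q', Eqv (Form.disj (quant q A) B) (quant q' (Form.disj A B.lift)) := by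
  refine ⟨q, fun I ρ => ?_⟩
  haveI := I.dom_nonempty
  cases q
  · simp only [quant, Form.val, Form.val_lift]
    exact (R4 (fun d => Form.val_mem_vup I A _) (Form.val_mem_vup I B ρ)).symm
  · simp only [quant, Form.val, Form.val_lift]
    exact (R2 (fun d => Form.val_mem_vup I A _) (Form.val_mem_vup I B ρ)).symm

lemma shift_disj_right {n : ℕ} (q : Bool) (A : Form L n) (B : Form L (n+1)) :
    ∃ q', Eqv (Form.disj A (quant q B)) (quant q' (Form.disj A.lift B)) := by
  refine ⟨q, fun I ρ => ?_⟩
  haveI := I.dom_nonempty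
  cases q
  · simp only [quant, Form.val, Form.val_lift]
    exact (R4' (fun d => Form.val_mem_vup I B _) (Form.val_mem_vup I A ρ)).symm
  · simp only [quant, Form.val, Form.val_lift]
    exact (R2' (fun d => Form.val_mem_vup I B _) (Form.val_mem_vup I A ρ)).symm

lemma shift_impl_left {n : ℕ} (q : Bool) (A : Form L (n+1)) (B : Form L n) :
    ∃ q', Eqv (Form.impl (quant q A) B) (quant q' (Form.impl A B.lift)) := by
  refine ⟨!q, fun I ρ => ?_⟩
  haveI := I.dom_nonempty
  cases q
  · simp only [quant, Form.val, Form.val_lift, Bool.not_false]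
    exact (R6 (fun d => Form.val_mem_vup I A _) (Form.val_mem_vup I B ρ)).symm
  · simp only [quant, Form.val, Form.val_lift, Bool.not_true]
    exact (R5 (fun d => Form.val_mem_vup I A _) (Form.val_mem_vup I B ρ)).symm

lemma shift_impl_right {n : ℕ} (q : Bool) (A : Form L n) (B : Form L (n+1)) :
    ∃ q', Eqv (Form.impl A (quant q B)) (quant q' (Form.impl A.lift B)) := by
  refine ⟨q, fun I ρ => ?_⟩
  haveI := I.dom_nonempty
  cases q
  · simp only [quant, Form.val, Form.val_lift]
    exact (R8 (fun d => Form.val_mem_vup I B _) (Form.val_mem_vup I A ρ)).symm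
  · simp only [quant, Form.val, Form.val_lift]
    exact (R7 (fun d => Form.val_mem_vup I B _) (Form.val_mem_vup I A ρ)).symm

lemma quantFree_op_conj {n : ℕ} {A B : Form L n} (h1 : QuantFree A) (h2 : QuantFree B) :
    QuantFree (Form.conj A B) := by simp only [QuantFree]; exact ⟨h1, h2⟩
lemma quantFree_op_disj {n : ℕ} {A B : Form L n} (h1 : QuantFree A) (h2 : QuantFree B) :
    QuantFree (Form.disj A B) := by simp only [QuantFree]; exact ⟨h1, h2⟩
lemma quantFree_op_impl {n : ℕ} {A B : Form L n} (h1 : QuantFree A) (h2 : QuantFree B) :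
    QuantFree (Form.impl A B) := by simp only [QuantFree]; exact ⟨h1, h2⟩
lemma deltaFree_op_conj {n : ℕ} {A B : Form L n} (h1 : DeltaFree A) (h2 : DeltaFree B) :
    DeltaFree (Form.conj A B) := by simp only [DeltaFree]; exact ⟨h1, h2⟩
lemma deltaFree_op_disj {n : ℕ} {A B : Form L n} (h1 : DeltaFree A) (h2 : DeltaFree B) :
    DeltaFree (Form.disj A B) := by simp only [DeltaFree]; exact ⟨h1, h2⟩
lemma deltaFree_op_impl {n : ℕ} {A B : Form L n} (h1 : DeltaFree A) (h2 : DeltaFree B) :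
    DeltaFree (Form.impl A B) := by simp only [DeltaFree]; exact ⟨h1, h2⟩

lemma combine_qf
    (op : ∀ {m : ℕ}, Form L m → Form L m → Form L m)
    (hqf : ∀ {m : ℕ} {A B : Form L m}, QuantFree A → QuantFree B → QuantFree (op A B))
    (hdf : ∀ {m : ℕ} {A B : Form L m}, DeltaFree A → DeltaFree B → DeltaFree (op A B))
    (hshift : ∀ {m : ℕ} (q : Bool) (A : Form L m) (B : Form L (m+1)),
      ∃ q', Eqv (op A (quant q B)) (quant q' (op A.lift B))) :
    ∀ {m : ℕ} {B : Form L m}, IsPrenex B → ∀ {A : Form L m}, QuantFree A → DeltaFree A →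
      DeltaFree B → ∃ C : Form L m, IsPrenex C ∧ DeltaFree C ∧ Eqv (op A B) C := by
  intro m B hB
  induction hB with
  | qf hq =>
      intro A hA hdA hdB
      exact ⟨op A _, .qf (hqf hA hq), hdf hdA hdB, fun I ρ => rfl⟩
  | @all m' B' hB' ih =>
      intro A hA hdA hdB
      obtain ⟨q', he⟩ := hshift true A B'
      obtain ⟨C, hC, hdC, heC⟩ := ih (quantFree_rename A _ hA) (deltaFree_rename A _ hdA) hdB
      exact ⟨quant q' C, isPrenex_quant q' hC, deltaFree_quant q' hdC,
        fun I ρ => (he I ρ).trans (eqv_quant_congr q' heC I ρ)⟩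
  | @ex m' B' hB' ih =>
      intro A hA hdA hdB
      obtain ⟨q', he⟩ := hshift false A B'
      obtain ⟨C, hC, hdC, heC⟩ := ih (quantFree_rename A _ hA) (deltaFree_rename A _ hdA) hdB
      exact ⟨quant q' C, isPrenex_quant q' hC, deltaFree_quant q' hdC,
        fun I ρ => (he I ρ).trans (eqv_quant_congr q' heC I ρ)⟩

lemma combine_main
    (op : ∀ {m : ℕ}, Form L m → Form L m → Form L m)
    (hqf : ∀ {m : ℕ} {A B : Form L m}, QuantFree A → QuantFree B → QuantFree (op A B))
    (hdf : ∀ {m : ℕ} {A B : Form L m}, DeltaFree A → DeltaFree B → DeltaFree (op A B))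
    (hshiftR : ∀ {m : ℕ} (q : Bool) (A : Form L m) (B : Form L (m+1)),
      ∃ q', Eqv (op A (quant q B)) (quant q' (op A.lift B)))
    (hshiftL : ∀ {m : ℕ} (q : Bool) (A : Form L (m+1)) (B : Form L m),
      ∃ q', Eqv (op (quant q A) B) (quant q' (op A B.lift))) :
    ∀ {m : ℕ} {A : Form L m}, IsPrenex A → ∀ {B : Form L m}, IsPrenex B → DeltaFree A →
      DeltaFree B → ∃ C : Form L m, IsPrenex C ∧ DeltaFree C ∧ Eqv (op A B) C := by
  intro m A hA
  induction hA with
  | qf hq =>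
      intro B hB hdA hdB
      exact combine_qf op @hqf @hdf @hshiftR hB hq hdA hdB
  | @all m' A' hA' ih =>
      intro B hB hdA hdB
      obtain ⟨q', he⟩ := hshiftL true A' B
      obtain ⟨C, hC, hdC, heC⟩ := ih (isPrenex_rename hB _) hdA (deltaFree_rename B _ hdB)
      exact ⟨quant q' C, isPrenex_quant q' hC, deltaFree_quant q' hdC,
        fun I ρ => (he I ρ).trans (eqv_quant_congr q' heC I ρ)⟩
  | @ex m' A' hA' ih =>
      intro B hB hdA hdB
      obtain ⟨q', he⟩ := hshiftL false A' B
      obtain ⟨C, hC, hdC, heC⟩ := ih (isPrenex_rename hB _) hdA (deltaFree_rename B _ hdB)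
      exact ⟨quant q' C, isPrenex_quant q' hC, deltaFree_quant q' hdC,
        fun I ρ => (he I ρ).trans (eqv_quant_congr q' heC I ρ)⟩

theorem prenex_general {n : ℕ} (A : Form L n) (hA : DeltaFree A) :
    ∃ P : Form L n, IsPrenex P ∧ DeltaFree P ∧ Eqv A P := by
  induction A with
  | falsum => exact ⟨.falsum, .qf trivial, trivial, fun I ρ => rfl⟩
  | atom R ts => exact ⟨.atom R ts, .qf trivial, trivial, fun I ρ => rfl⟩
  | conj A B ihA ihB =>
      obtain ⟨P1, hp1, hd1, he1⟩ := ihA hA.1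
      obtain ⟨P2, hp2, hd2, he2⟩ := ihB hA.2
      obtain ⟨C, hC, hdC, heC⟩ :=
        combine_main Form.conj
          (fun h1 h2 => quantFree_op_conj h1 h2)
          (fun h1 h2 => deltaFree_op_conj h1 h2)
          shift_conj_right shift_conj_left hp1 hp2 hd1 hd2
      exact ⟨C, hC, hdC, fun I ρ => (eqv_conj_congr he1 he2 I ρ).trans (heC I ρ)⟩
  | disj A B ihA ihB =>
      obtain ⟨P1, hp1, hd1, he1⟩ := ihA hA.1
      obtain ⟨P2, hp2, hd2, he2⟩ := ihB hA.2
      obtain ⟨C, hC, hdC, heC⟩ :=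
        combine_main Form.disj
          (fun h1 h2 => quantFree_op_disj h1 h2)
          (fun h1 h2 => deltaFree_op_disj h1 h2)
          shift_disj_right shift_disj_left hp1 hp2 hd1 hd2
      exact ⟨C, hC, hdC, fun I ρ => (eqv_disj_congr he1 he2 I ρ).trans (heC I ρ)⟩
  | impl A B ihA ihB =>
      obtain ⟨P1, hp1, hd1, he1⟩ := ihA hA.1
      obtain ⟨P2, hp2, hd2, he2⟩ := ihB hA.2
      obtain ⟨C, hC, hdC, heC⟩ :=
        combine_main Form.impl
          (fun h1 h2 => quantFree_op_impl h1 h2)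
          (fun h1 h2 => deltaFree_op_impl h1 h2)
          shift_impl_right shift_impl_left hp1 hp2 hd1 hd2
      exact ⟨C, hC, hdC, fun I ρ => (eqv_impl_congr he1 he2 I ρ).trans (heC I ρ)⟩
  | delta A ih => exact hA.elim
  | all A ih =>
      obtain ⟨P, hp, hd, he⟩ := ih hA
      exact ⟨.all P, .all hp, hd, eqv_all_congr he⟩
  | ex A ih =>
      obtain ⟨P, hp, hd, he⟩ := ih hA
      exact ⟨.ex P, .ex hp, hd, eqv_ex_congr he⟩

end Combinators
/-- In `G_{V_↑}` every sentence has a logically equivalent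
prenex sentence. -/
theorem stmt_11 {L : Lang} (A : Form L 0) (hA : DeltaFree A) :
    ∃ P : Form L 0, IsPrenex P ∧ DeltaFree P ∧
      ∀ I : Interp L Vup, Form.sval I A = Form.sval I P := by
  obtain ⟨P, h1, h2, h3⟩ := prenex_general A hA
  exact ⟨P, h1, h2, fun I => h3 I Fin.elim0⟩

end GodelPaper
end

section
/- Let V be a Gödel set with no accumulation point from above (no x ∈ V is a limit of points of V strictly greater than x) that possesses an inner accumulation point from below, i.e., some x ∈ V with x < 1 that is a limit of points of V strictly less than x. Then not every sentence admits a logically equivalent prenex sentence in G_V: there is a sentence (in a language with a unary predicate A and a propositional atom X) for which no prenex sentence P satisfies I(F)=I(P) for all V-interpretations I. -/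
namespace GodelPaper

section Stmt12Aux

open Classical

variable {L : Lang} {V : Set ℝ}

/-- Values of formulas lie in any closed subset of `[0,1]` containing `0`, `1`
and all atomic values. -/
lemma val_mem_closed (I : Interp L V) (S : Set ℝ) (hcl : IsClosed S)
    (hsub : S ⊆ Set.Icc 0 1) (h0 : (0:ℝ) ∈ S) (h1 : (1:ℝ) ∈ S)
    (hrel : ∀ {k : ℕ} (R : L.Rel k) (d : Fin k → I.Dom), I.relVal R d ∈ S) :
    ∀ {n : ℕ} (G : Form L n) (ρ : Fin n → I.Dom), Form.val I G ρ ∈ S := by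
  intro n G
  induction G with
  | falsum => intro ρ; simpa only [Form.val] using h0
  | atom R ts => intro ρ; simpa only [Form.val] using hrel R _
  | conj A B ihA ihB =>
      intro ρ
      simp only [Form.val]
      rcases le_total (Form.val I A ρ) (Form.val I B ρ) with hab | hab
      · rw [min_eq_left hab]; exact ihA ρ
      · rw [min_eq_right hab]; exact ihB ρ
  | disj A B ihA ihB =>
      intro ρ
      simp only [Form.val]
      rcases le_total (Form.val I A ρ) (Form.val I B ρ) with hab | hab
      · rw [max_eq_right hab]; exact ihB ρ
      · rw [max_eq_left hab]; exact ihA ρ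
  | impl A B ihA ihB =>
      intro ρ
      simp only [Form.val]
      split
      · exact h1
      · exact ihB ρ
  | delta A ih =>
      intro ρ
      simp only [Form.val]
      split
      · exact h1
      · exact h0
  | all A ih =>
      intro ρ
      simp only [Form.val]
      have hTS : {t : ℝ | ∃ d : I.Dom, t = Form.val I A (Fin.snoc ρ d)} ⊆ S := by
        rintro t ⟨d, rfl⟩; exact ih _
      obtain ⟨d0⟩ := I.dom_nonempty
      have hne : {t : ℝ | ∃ d : I.Dom, t = Form.val I A (Fin.snoc ρ d)}.Nonempty :=
        ⟨_, d0, rfl⟩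
      have hbdd : BddBelow {t : ℝ | ∃ d : I.Dom, t = Form.val I A (Fin.snoc ρ d)} :=
        ⟨0, fun t ht => (hsub (hTS ht)).1⟩
      have hmem := csInf_mem_closure hne hbdd
      exact hcl.closure_subset_iff.mpr hTS hmem
  | ex A ih =>
      intro ρ
      simp only [Form.val]
      have hTS : {t : ℝ | ∃ d : I.Dom, t = Form.val I A (Fin.snoc ρ d)} ⊆ S := by
        rintro t ⟨d, rfl⟩; exact ih _
      obtain ⟨d0⟩ := I.dom_nonempty
      have hne : {t : ℝ | ∃ d : I.Dom, t = Form.val I A (Fin.snoc ρ d)}.Nonempty :=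
        ⟨_, d0, rfl⟩
      have hbdd : BddAbove {t : ℝ | ∃ d : I.Dom, t = Form.val I A (Fin.snoc ρ d)} :=
        ⟨1, fun t ht => (hsub (hTS ht)).2⟩
      have hmem := csSup_mem_closure hne hbdd
      exact hcl.closure_subset_iff.mpr hTS hmem

/-- Values of formulas lie in `[0,1]`. -/
lemma val_mem_Icc (hVsub : V ⊆ Set.Icc 0 1) (I : Interp L V)
    {n : ℕ} (G : Form L n) (ρ : Fin n → I.Dom) : Form.val I G ρ ∈ Set.Icc (0:ℝ) 1 :=
  val_mem_closed I (Set.Icc 0 1) isClosed_Icc subset_rfl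
    (by norm_num) (by norm_num) (fun R d => hVsub (I.relVal_mem R d)) G ρ

/-- The collapsing map sending everything `≥ x0` to `1`. -/
noncomputable def gmap (x0 t : ℝ) : ℝ := if x0 ≤ t then 1 else t

lemma gmap_mono {x0 a b : ℝ} (hab : a ≤ b) (hb : b ≤ 1) : gmap x0 a ≤ gmap x0 b := by
  unfold gmap; split_ifs <;> linarith

lemma gmap_min {x0 a b : ℝ} (ha : a ≤ 1) (hb : b ≤ 1) :
    gmap x0 (min a b) = min (gmap x0 a) (gmap x0 b) := by
  rcases le_total a b with hab | hab
  · rw [min_eq_left hab, min_eq_left (gmap_mono hab hb)]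
  · rw [min_eq_right hab, min_eq_right (gmap_mono hab ha)]

lemma gmap_max {x0 a b : ℝ} (ha : a ≤ 1) (hb : b ≤ 1) :
    gmap x0 (max a b) = max (gmap x0 a) (gmap x0 b) := by
  rcases le_total a b with hab | hab
  · rw [max_eq_right hab, max_eq_right (gmap_mono hab hb)]
  · rw [max_eq_left hab, max_eq_left (gmap_mono hab ha)]

lemma gmap_impl {x0 a b : ℝ} (hx1 : x0 ≤ 1) (ha : a ≤ 1) (hb : b ≤ 1) :
    (if gmap x0 a ≤ gmap x0 b then (1:ℝ) else gmap x0 b) =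
      gmap x0 (if a ≤ b then 1 else b) := by
  unfold gmap; split_ifs <;> linarith

variable (P : L.Rel 1) (X : L.Rel 0) (v : ℕ → ℝ)

/-- Atomic values of the canonical models. -/
noncomputable def rv (w : ℝ) : ∀ k, L.Rel k → (Fin k → ℕ) → ℝ
  | 0, R, _ => if R = X then w else 1
  | 1, R, d => if R = P then v (d 0) else 1
  | _+2, _, _ => 1

/-- The canonical model with domain `ℕ`, `P(d) = v d`, `X = w`. -/
noncomputable def model (w : ℝ) (hvV : ∀ n, v n ∈ V) (hw : w ∈ V)
    (h1V : (1:ℝ) ∈ V) : Interp L V where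
  Dom := ℕ
  dom_nonempty := ⟨0⟩
  funMap := fun _ _ => 0
  relVal := fun {k} => rv P X v w k
  relVal_mem := fun {k} R d => by
    match k, R, d with
    | 0, R, d =>
        simp only [rv]
        split
        · exact hw
        · exact h1V
    | 1, R, d =>
        simp only [rv]
        split
        · exact hvV _
        · exact h1V
    | (k+2), R, d => simpa only [rv] using h1V

lemma model_relVal (w : ℝ) (hvV : ∀ n, v n ∈ V) (hw : w ∈ V) (h1V : (1:ℝ) ∈ V)
    {k : ℕ} (R : L.Rel k) (d : Fin k → ℕ) :
    (model P X v w hvV hw h1V).relVal R d = rv P X v w k R d := rfl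

lemma eval_model_eq (w w' : ℝ) (hvV : ∀ n, v n ∈ V) (hw : w ∈ V) (hw' : w' ∈ V)
    (h1V : (1:ℝ) ∈ V) {n : ℕ} (t : Term L (Fin n)) (ρ : Fin n → ℕ) :
    Term.eval (model P X v w hvV hw h1V) ρ t
      = Term.eval (model P X v w' hvV hw' h1V) ρ t := by
  induction t with
  | var i => rfl
  | func f ts ih => rfl

lemma rv_transfer {x0 : ℝ} (hx01 : x0 < 1) (hvlt : ∀ n, v n < x0) :
    ∀ (k : ℕ) (R : L.Rel k) (d : Fin k → ℕ),
      rv P X v 1 k R d = gmap x0 (rv P X v x0 k R d) := by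
  intro k R d
  match k, R, d with
  | 0, R, d =>
      simp only [rv, gmap]
      split_ifs <;> first | rfl | linarith
  | 1, R, d =>
      simp only [rv, gmap]
      split_ifs <;> first | rfl | linarith [hvlt (d 0)]
  | (k+2), R, d =>
      simp only [rv, gmap]
      exact (if_pos hx01.le).symm

lemma qf_transfer (x0 : ℝ) (hVsub : V ⊆ Set.Icc 0 1)
    (hvV : ∀ n, v n ∈ V) (hx0V : x0 ∈ V) (h1V : (1:ℝ) ∈ V)
    (hx01 : x0 < 1) (hx0pos : 0 < x0) (hvlt : ∀ n, v n < x0) :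
    ∀ {n : ℕ} (G : Form L n), QuantFree G → DeltaFree G → ∀ ρ : Fin n → ℕ,
      Form.val (model P X v 1 hvV h1V h1V) G ρ
        = gmap x0 (Form.val (model P X v x0 hvV hx0V h1V) G ρ) := by
  set I := model P X v x0 hvV hx0V h1V with hI
  set J := model P X v 1 hvV h1V h1V with hJ
  intro n G
  induction G with
  | falsum =>
      intro _ _ ρ
      simp only [Form.val, gmap, if_neg (not_le.mpr hx0pos)]
      exact (if_neg (not_le.mpr hx0pos)).symm
  | atom R ts =>
      intro _ _ ρ
      simp only [Form.val, hI, hJ, model_relVal]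
      rw [show (fun j => Term.eval (model P X v 1 hvV h1V h1V) ρ (ts j))
            = (fun j => Term.eval (model P X v x0 hvV hx0V h1V) ρ (ts j)) from
          funext fun j => eval_model_eq P X v 1 x0 hvV h1V hx0V h1V (ts j) ρ]
      exact rv_transfer P X v hx01 hvlt _ R _
  | conj A B ihA ihB =>
      intro hqf hdf ρ
      simp only [QuantFree] at hqf
      simp only [DeltaFree] at hdf
      have hA := (val_mem_Icc hVsub I A ρ).2
      have hB := (val_mem_Icc hVsub I B ρ).2
      simp only [Form.val]
      rw [ihA hqf.1 hdf.1 ρ, ihB hqf.2 hdf.2 ρ, ← gmap_min hA hB]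
  | disj A B ihA ihB =>
      intro hqf hdf ρ
      simp only [QuantFree] at hqf
      simp only [DeltaFree] at hdf
      have hA := (val_mem_Icc hVsub I A ρ).2
      have hB := (val_mem_Icc hVsub I B ρ).2
      simp only [Form.val]
      rw [ihA hqf.1 hdf.1 ρ, ihB hqf.2 hdf.2 ρ, ← gmap_max hA hB]
  | impl A B ihA ihB =>
      intro hqf hdf ρ
      simp only [QuantFree] at hqf
      simp only [DeltaFree] at hdf
      have hA := (val_mem_Icc hVsub I A ρ).2
      have hB := (val_mem_Icc hVsub I B ρ).2
      simp only [Form.val]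
      rw [ihA hqf.1 hdf.1 ρ, ihB hqf.2 hdf.2 ρ, gmap_impl hx01.le hA hB]
  | delta A ih =>
      intro _ hdf
      simp only [DeltaFree] at hdf
  | all A ih =>
      intro hqf
      simp only [QuantFree] at hqf
  | ex A ih =>
      intro hqf
      simp only [QuantFree] at hqf

lemma prenex_transfer (x0 : ℝ) (hVcl : IsClosed V) (hVsub : V ⊆ Set.Icc 0 1)
    (hV0 : (0:ℝ) ∈ V)
    (hvV : ∀ n, v n ∈ V) (hx0V : x0 ∈ V) (h1V : (1:ℝ) ∈ V)
    (hx01 : x0 < 1) (hx0pos : 0 < x0) (hvlt : ∀ n, v n < x0) :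
    ∀ {n : ℕ} {Q : Form L n}, IsPrenex Q → DeltaFree Q → ∀ ρ : Fin n → ℕ,
      Form.val (model P X v x0 hvV hx0V h1V) Q ρ = 1 →
      Form.val (model P X v 1 hvV h1V h1V) Q ρ = 1 := by
  set I := model P X v x0 hvV hx0V h1V with hI
  set J := model P X v 1 hvV h1V h1V with hJ
  have hIccI : ∀ {m : ℕ} (G : Form L m) (ρ : Fin m → ℕ),
      Form.val I G ρ ∈ Set.Icc (0:ℝ) 1 := fun G ρ => val_mem_Icc hVsub I G ρ
  have hIccJ : ∀ {m : ℕ} (G : Form L m) (ρ : Fin m → ℕ),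
      Form.val J G ρ ∈ Set.Icc (0:ℝ) 1 := fun G ρ => val_mem_Icc hVsub J G ρ
  -- all values of `I` lie in `W = (V ∩ Iic x0) ∪ {1}`
  have hW : ∀ {m : ℕ} (G : Form L m) (ρ : Fin m → ℕ),
      Form.val I G ρ ∈ (V ∩ Set.Iic x0) ∪ {1} := by
    intro m G ρ
    refine val_mem_closed I _ ((hVcl.inter isClosed_Iic).union isClosed_singleton)
      ?_ (Or.inl ⟨hV0, hx0pos.le⟩) (Or.inr rfl) ?_ G ρ
    · rintro t (⟨htV, -⟩ | ht)
      · exact hVsub htV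
      · rw [Set.mem_singleton_iff] at ht
        rw [ht]; norm_num
    · intro k R d
      show rv P X v x0 k R d ∈ V ∩ Set.Iic x0 ∪ {1}
      match k, R, d with
      | 0, R, d =>
          simp only [rv]
          split
          · exact Or.inl ⟨hx0V, le_refl x0⟩
          · exact Or.inr rfl
      | 1, R, d =>
          simp only [rv]
          split
          · exact Or.inl ⟨hvV _, (hvlt _).le⟩
          · exact Or.inr rfl
      | (k+2), R, d => exact Or.inr rfl
  intro n Q hpre
  induction hpre with
  | qf hq =>
      intro hdf ρ h1
      rw [qf_transfer P X v x0 hVsub hvV hx0V h1V hx01 hx0pos hvlt _ hq hdf ρ, h1]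
      simp only [gmap, if_pos hx01.le]
  | all hA ih =>
      rename_i m A
      intro hdf ρ h1
      simp only [DeltaFree] at hdf
      simp only [Form.val] at h1
      have hall : ∀ d : ℕ, Form.val I A (Fin.snoc ρ d) = 1 := by
        intro d
        have hub : Form.val I A (Fin.snoc ρ d) ≤ 1 := (hIccI A _).2
        have hlb : (1:ℝ) ≤ Form.val I A (Fin.snoc ρ d) := by
          rw [← h1]
          exact csInf_le ⟨0, by rintro t ⟨e, rfl⟩; exact (hIccI A _).1⟩ ⟨d, rfl⟩
        linarith
      have hset : {t : ℝ | ∃ d : ℕ, t = Form.val J A (Fin.snoc ρ d)} = {1} := by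
        ext t
        simp only [Set.mem_setOf_eq, Set.mem_singleton_iff]
        constructor
        · rintro ⟨d, rfl⟩
          exact ih hdf _ (hall d)
        · rintro rfl
          exact ⟨0, (ih hdf _ (hall 0)).symm⟩
      have hfin : sInf {t : ℝ | ∃ d : ℕ, t = Form.val J A (Fin.snoc ρ d)} = (1:ℝ) := by
        rw [hset]
        exact csInf_singleton 1
      exact hfin
  | ex hA ih =>
      rename_i m A
      intro hdf ρ h1
      simp only [DeltaFree] at hdf
      simp only [Form.val] at h1
      have hex : ∃ d : ℕ, Form.val I A (Fin.snoc ρ d) = 1 := by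
        by_contra hno
        push_neg at hno
        have hub : ∀ t ∈ {t : ℝ | ∃ d : ℕ, t = Form.val I A (Fin.snoc ρ d)}, t ≤ x0 := by
          rintro t ⟨d, rfl⟩
          rcases hW A (Fin.snoc ρ d) with ⟨-, ht⟩ | ht
          · exact ht
          · rw [Set.mem_singleton_iff] at ht
            exact absurd ht (hno d)
        have hle : (1:ℝ) ≤ x0 := by
          rw [← h1]
          exact csSup_le ⟨_, (0:ℕ), rfl⟩ hub
        linarith
      obtain ⟨d, hd⟩ := hex
      have h1J : Form.val J A (Fin.snoc ρ d) = 1 := ih hdf _ hd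
      have hbddJ : BddAbove {t : ℝ | ∃ d : ℕ, t = Form.val J A (Fin.snoc ρ d)} :=
        ⟨1, by rintro t ⟨e, rfl⟩; exact (hIccJ A _).2⟩
      have hfin : sSup {t : ℝ | ∃ d : ℕ, t = Form.val J A (Fin.snoc ρ d)} = (1:ℝ) := by
        apply le_antisymm
        · exact csSup_le ⟨_, d, rfl⟩ (by rintro t ⟨e, rfl⟩; exact (hIccJ A _).2)
        · have h2 : Form.val J A (Fin.snoc ρ d)
              ≤ sSup {t : ℝ | ∃ d : ℕ, t = Form.val J A (Fin.snoc ρ d)} :=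
            le_csSup hbddJ ⟨d, rfl⟩
          rw [h1J] at h2
          exact h2
      exact hfin

lemma sSup_range_v (x0 : ℝ) (hvlt : ∀ n, v n < x0)
    (hvgt : ∀ n : ℕ, x0 - 1/((n:ℝ)+1) < v n) :
    sSup {t : ℝ | ∃ d : ℕ, t = v d} = x0 := by
  have hbdd : BddAbove {t : ℝ | ∃ d : ℕ, t = v d} :=
    ⟨x0, by rintro t ⟨d, rfl⟩; exact (hvlt d).le⟩
  apply le_antisymm
  · exact csSup_le ⟨_, 0, rfl⟩ (by rintro t ⟨d, rfl⟩; exact (hvlt d).le)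
  · by_contra hc
    push_neg at hc
    obtain ⟨n, hn⟩ := exists_nat_one_div_lt
      (show (0:ℝ) < x0 - sSup {t : ℝ | ∃ d : ℕ, t = v d} by linarith)
    have h1 : v n ≤ sSup {t : ℝ | ∃ d : ℕ, t = v d} := le_csSup hbdd ⟨n, rfl⟩
    have h2 := hvgt n
    linarith

lemma val_F (x0 w : ℝ) (hvV : ∀ n, v n ∈ V) (hw : w ∈ V) (h1V : (1:ℝ) ∈ V)
    (hvlt : ∀ n, v n < x0) (hvgt : ∀ n : ℕ, x0 - 1/((n:ℝ)+1) < v n) :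
    Form.sval (model P X v w hvV hw h1V)
      (Form.impl (atom0 X) (Form.ex (atom1 P (Term.var 0))))
      = if w ≤ x0 then 1 else x0 := by
  set I := model P X v w hvV hw h1V with hI
  have hX : Form.val I (atom0 X) Fin.elim0 = w := by
    show (if X = X then w else (1:ℝ)) = w
    rw [if_pos rfl]
  have hA : ∀ d : ℕ, Form.val I (atom1 P (Term.var (0 : Fin 1))) (Fin.snoc Fin.elim0 d)
      = v d := by
    intro d
    show (if P = P then v ((Fin.snoc Fin.elim0 d : Fin 1 → ℕ) 0) else (1:ℝ)) = v d
    rw [if_pos rfl]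
    simp [Fin.snoc]
  have hEx : Form.val I (Form.ex (atom1 P (Term.var 0))) Fin.elim0 = x0 := by
    have hsets : {t : ℝ | ∃ d : ℕ,
        t = Form.val I (atom1 P (Term.var 0)) (Fin.snoc Fin.elim0 d)}
        = {t : ℝ | ∃ d : ℕ, t = v d} := by
      ext t
      simp only [Set.mem_setOf_eq]
      constructor
      · rintro ⟨d, rfl⟩; exact ⟨d, hA d⟩
      · rintro ⟨d, rfl⟩; exact ⟨d, (hA d).symm⟩
    have hfin : sSup {t : ℝ | ∃ d : ℕ,
        t = Form.val I (atom1 P (Term.var 0)) (Fin.snoc Fin.elim0 d)} = x0 := by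
      rw [hsets]
      exact sSup_range_v v x0 hvlt hvgt
    exact hfin
  show (if Form.val I (atom0 X) Fin.elim0
        ≤ Form.val I (Form.ex (atom1 P (Term.var 0))) Fin.elim0 then (1:ℝ)
      else Form.val I (Form.ex (atom1 P (Term.var 0))) Fin.elim0)
      = if w ≤ x0 then 1 else x0
  rw [hX, hEx]

end Stmt12Aux

/-- If the Gödel set `V` has no accumulation point from above
but has an inner accumulation point from below (some `x ∈ V`, `x < 1`, which
is a limit of points of `V` strictly less than `x`), then not every sentence
admits a logically equivalent prenex sentence in `G_V`: in a language with a
unary predicate `P` and a propositional atom `X` there is a sentence with no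
prenex equivalent. -/
theorem stmt_12 {L : Lang} {V : Set ℝ} (hV : GodelSet V)
    (hnoabove : ∀ x ∈ V, ∃ ε > (0:ℝ), V ∩ Set.Ioo x (x + ε) = ∅)
    (hinner : ∃ x ∈ V, x < 1 ∧ ∀ ε > (0:ℝ), (V ∩ Set.Ioo (x - ε) x).Nonempty)
    (P : L.Rel 1) (X : L.Rel 0) :
    ∃ F : Form L 0, DeltaFree F ∧
      ¬ ∃ Q : Form L 0, IsPrenex Q ∧ DeltaFree Q ∧
          ∀ I : Interp L V, Form.sval I F = Form.sval I Q := by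
  obtain ⟨hVcl, hVsub, hV0, hV1⟩ := hV
  obtain ⟨x0, hx0V, hx01, hacc⟩ := hinner
  choose v hv using fun n : ℕ => hacc (1/((n:ℝ)+1)) (by positivity)
  have hvV : ∀ n, v n ∈ V := fun n => (hv n).1
  have hvgt : ∀ n : ℕ, x0 - 1/((n:ℝ)+1) < v n := fun n => (hv n).2.1
  have hvlt : ∀ n, v n < x0 := fun n => (hv n).2.2
  have hx0pos : (0:ℝ) < x0 := lt_of_le_of_lt (hVsub (hvV 0)).1 (hvlt 0)
  refine ⟨Form.impl (atom0 X) (Form.ex (atom1 P (Term.var 0))), ⟨trivial, trivial⟩, ?_⟩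
  rintro ⟨Q, hpre, hdf, heq⟩
  have hIF := heq (model P X v x0 hvV hx0V hV1)
  have hJF := heq (model P X v 1 hvV hV1 hV1)
  rw [val_F P X v x0 x0 hvV hx0V hV1 hvlt hvgt, if_pos le_rfl] at hIF
  rw [val_F P X v x0 1 hvV hV1 hV1 hvlt hvgt, if_neg (not_le.mpr hx01)] at hJF
  have hJQ : Form.val (model P X v 1 hvV hV1 hV1) Q Fin.elim0 = 1 :=
    prenex_transfer P X v x0 hVcl hVsub hV0 hvV hx0V hV1 hx01 hx0pos hvlt
      hpre hdf Fin.elim0 hIF.symm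
  rw [Form.sval] at hJF
  rw [hJQ] at hJF
  exact absurd hJF (ne_of_lt hx01)


end GodelPaper
end
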